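/- arXiv:2211.06848 — 11 statements merged into one kernel-verified Lean document; each statement's English description precedes it below -/
import Mathlib

section
/- Let G act transitively on a set Ω preserving a G-invariant equivalence relation ∼ that is not the universal relation, and let ω ∈ Ω. Then G acts transitively on the set of pairs (ω₁,ω₂) with ω₁ ≁ ω₂ if and only if for every g ∈ G not stabilizing the block [ω], the group G is the disjoint union of the double coset G(ω)·g·G(ω) and the setwise stabilizer G([ω]) of the block [ω]. -/
/-- Lemma 2.1 (double coset criterion for 2-by-block-transitivity). -/
theorem stmt_0 {G Ω : Type*} [Group G] [MulAction G Ω]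
    (r : Ω → Ω → Prop) (hequiv : Equivalence r)
    (hinv : ∀ (g : G) (x y : Ω), r x y → r (g • x) (g • y))
    (htrans : MulAction.IsPretransitive G Ω)
    (hnotuniv : ∃ x y : Ω, ¬ r x y) (ω : Ω) :
    (∀ a b c d : Ω, ¬ r a b → ¬ r c d → ∃ g : G, g • a = c ∧ g • b = d) ↔
    (∀ g : G, ¬ r (g • ω) ω →
      ((∀ h : G, r (h • ω) ω ∨ ∃ a b : G, a • ω = ω ∧ b • ω = ω ∧ h = a * g * b) ∧
       (∀ a b : G, a • ω = ω → b • ω = ω → ¬ r ((a * g * b) • ω) ω))) := by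
  constructor
  · intro hpt g hg
    constructor
    · intro h
      by_cases hr : r (h • ω) ω
      · exact Or.inl hr
      · right
        obtain ⟨k, hk1, hk2⟩ := hpt (g • ω) ω (h • ω) ω hg hr
        refine ⟨k, g⁻¹ * k⁻¹ * h, hk2, ?_, by group⟩
        have : k⁻¹ • (h • ω) = g • ω := by rw [← hk1, inv_smul_smul]
        simp [mul_smul, this]
    · intro a b ha hb hcon
      apply hg
      have h2 := hinv a⁻¹ _ _ hcon
      have e1 : a⁻¹ • ((a * g * b) • ω) = g • ω := by
        simp [mul_smul, hb]
      have e2 : a⁻¹ • ω = ω := by rw [← ha, inv_smul_smul, ha]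
      rwa [e1, e2] at h2
  · intro H a b c d hab hcd
    obtain ⟨u, hu⟩ := htrans.exists_smul_eq b ω
    obtain ⟨v, hv⟩ := htrans.exists_smul_eq d ω
    obtain ⟨g₁, hg₁⟩ := htrans.exists_smul_eq ω (u • a)
    obtain ⟨g₂, hg₂⟩ := htrans.exists_smul_eq ω (v • c)
    have hne1 : ¬ r (g₁ • ω) ω := by
      intro hcon
      apply hab
      rw [hg₁, ← hu] at hcon
      have := hinv u⁻¹ _ _ hcon
      simpa using this
    have hne2 : ¬ r (g₂ • ω) ω := by
      intro hcon
      apply hcd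
      rw [hg₂, ← hv] at hcon
      have := hinv v⁻¹ _ _ hcon
      simpa using this
    obtain ⟨cover, _⟩ := H g₁ hne1
    rcases cover g₂ with hr | ⟨p, q, hp, hq, heq⟩
    · exact absurd hr hne2
    · refine ⟨v⁻¹ * p * u, ?_, ?_⟩
      · have key : p • (g₁ • ω) = v • c := by
          rw [← hg₂, heq]; simp [mul_smul, hq]
        calc (v⁻¹ * p * u) • a = v⁻¹ • (p • (u • a)) := by simp [mul_smul]
          _ = c := by rw [← hg₁, key, inv_smul_smul]
      · calc (v⁻¹ * p * u) • b = v⁻¹ • (p • (u • b)) := by simp [mul_smul]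
          _ = d := by rw [hu, hp, ← hv, inv_smul_smul]
end

section
/- Let G be a finite group acting 2-by-block-transitively on a set Ω with invariant equivalence relation ∼, and let (ω,ω') be a pair of points in distinct blocks. Then the order of the two-point stabilizer satisfies |G(ω,ω')| = |G(ω)|² / (|G| − |G([ω])|). In particular |G(ω)|² is divisible by |G| − |G([ω])|. -/
open MulAction

/-- Corollary 2.2: order formula for the stabilizer of a distant pair. -/
theorem stmt_1 {G Ω : Type*} [Group G] [Finite G] [MulAction G Ω]
    (r : Ω → Ω → Prop) (hequiv : Equivalence r)
    (hinv : ∀ (g : G) (x y : Ω), r x y → r (g • x) (g • y))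
    (hnotuniv : ∃ x y : Ω, ¬ r x y)
    (h2bt : ∀ a b c d : Ω, ¬ r a b → ¬ r c d → ∃ g : G, g • a = c ∧ g • b = d)
    (ω ω' : Ω) (hdist : ¬ r ω ω') :
    Nat.card (MulAction.stabilizer G ω ⊓ MulAction.stabilizer G ω' : Subgroup G) =
      (Nat.card (MulAction.stabilizer G ω)) ^ 2 /
        (Nat.card G - Nat.card {g : G // r (g • ω) ω}) ∧
    (Nat.card G - Nat.card {g : G // r (g • ω) ω}) ∣
      (Nat.card (MulAction.stabilizer G ω)) ^ 2 := by
  classical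
  set S := MulAction.stabilizer G ω with hSdef
  set T := MulAction.stabilizer G ω' with hTdef
  have hdist' : ¬ r ω' ω := fun h => hdist (hequiv.symm h)
  -- the S-orbit of ω' is exactly {x | ¬ r x ω}
  have horb : ∀ x : Ω, x ∈ orbit S ω' ↔ ¬ r x ω := by
    intro x
    constructor
    · rintro ⟨s, rfl⟩ h
      have hs : (s : G) • ω = ω := s.2
      have h1 : r ((s : G)⁻¹ • ((s : G) • ω')) ((s : G)⁻¹ • ω) := hinv _ _ _ h
      rw [inv_smul_smul, inv_smul_eq_iff.mpr hs.symm] at h1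
      exact hdist' h1
    · intro h
      obtain ⟨g, hg1, hg2⟩ := h2bt ω ω' ω x hdist (fun hh => h (hequiv.symm hh))
      exact ⟨⟨g, hg1⟩, hg2⟩
  -- a section: every point of the S-orbit of ω' is of the form g • ω
  have hsec : ∀ x ∈ orbit S ω', ∃ g : G, g • ω = x := by
    intro x hx
    obtain ⟨g, hg1, _⟩ := h2bt ω ω' x ω hdist ((horb x).mp hx)
    exact ⟨g, hg1⟩
  choose σ hσ using hsec
  -- the bijection (orbit S ω') × S ≃ {g | ¬ r (g • ω) ω}
  let F : orbit S ω' × S → {g : G // ¬ r (g • ω) ω} := fun p =>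
    ⟨σ p.1.1 p.1.2 * (p.2 : G), by
      have hs : (p.2 : G) • ω = ω := p.2.2
      rw [mul_smul, hs, hσ p.1.1 p.1.2]
      exact (horb p.1.1).mp p.1.2⟩
  have hFbij : Function.Bijective F := by
    constructor
    · rintro ⟨⟨x, hx⟩, s⟩ ⟨⟨y, hy⟩, t⟩ h
      have h' : σ x hx * (s : G) = σ y hy * (t : G) := congrArg Subtype.val h
      have hs : (s : G) • ω = ω := s.2
      have ht : (t : G) • ω = ω := t.2
      have hxy : x = y := by
        have h2 := congrArg (· • ω) h'
        simp only [mul_smul, hs, ht, hσ] at h2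
        exact h2
      subst hxy
      have hst : (s : G) = (t : G) := mul_left_cancel h'
      exact Prod.ext rfl (Subtype.ext hst)
    · rintro ⟨g, hg⟩
      have hx : g • ω ∈ orbit S ω' := (horb _).mpr hg
      have hmem : (σ (g • ω) hx)⁻¹ * g ∈ S := by
        rw [MulAction.mem_stabilizer_iff, mul_smul, inv_smul_eq_iff, hσ]
      refine ⟨⟨⟨g • ω, hx⟩, ⟨(σ (g • ω) hx)⁻¹ * g, hmem⟩⟩, ?_⟩
      apply Subtype.ext
      simp [F, mul_inv_cancel_left]
  -- card of {g | ¬ r (g • ω) ω}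
  have hcardX : Nat.card {g : G // ¬ r (g • ω) ω}
      = Nat.card (orbit S ω') * Nat.card S := by
    rw [← Nat.card_prod]
    exact (Nat.card_eq_of_bijective F hFbij).symm
  -- orbit-stabilizer for S acting on Ω at ω'
  have hOS : Nat.card (orbit S ω') * Nat.card (stabilizer S ω') = Nat.card S := by
    rw [← Nat.card_prod]
    exact Nat.card_congr (orbitProdStabilizerEquivGroup S ω')
  -- stabilizer S ω' ≃ S ⊓ T
  have eK : Nat.card (stabilizer S ω') = Nat.card (S ⊓ T : Subgroup G) := by
    refine Nat.card_congr ⟨fun s => ⟨(s.1 : G), Subgroup.mem_inf.mpr ⟨s.1.2, s.2⟩⟩,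
      fun k => ⟨⟨k.1, (Subgroup.mem_inf.mp k.2).1⟩, (Subgroup.mem_inf.mp k.2).2⟩,
      fun s => rfl, fun k => rfl⟩
  -- complement cardinality
  have hcompl : Nat.card {g : G // ¬ r (g • ω) ω}
      = Nat.card G - Nat.card {g : G // r (g • ω) ω} := by
    have : Fintype G := Fintype.ofFinite G
    simp only [Nat.card_eq_fintype_card]
    exact Fintype.card_subtype_compl _
  -- nonemptiness
  have hpos : 0 < Nat.card {g : G // ¬ r (g • ω) ω} := by
    obtain ⟨g, hg1, _⟩ := h2bt ω ω' ω' ω hdist hdist'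
    have : Nonempty {g : G // ¬ r (g • ω) ω} := ⟨⟨g, by rw [hg1]; exact hdist'⟩⟩
    exact Nat.card_pos
  -- the key equation
  have key : Nat.card {g : G // ¬ r (g • ω) ω} * Nat.card (S ⊓ T : Subgroup G)
      = Nat.card S ^ 2 := by
    rw [hcardX, ← eK, mul_right_comm, hOS, sq]
  constructor
  · rw [← hcompl]
    exact (Nat.div_eq_of_eq_mul_left hpos (by rw [← key, mul_comm])).symm
  · rw [← hcompl]
    exact ⟨_, key.symm⟩
end

section
/- Let G ≤ Sym(Ω) act k-by-block-transitively on Ω with respect to an equivalence relation ∼, where k ≥ 2. Then for each ω ∈ Ω, the block stabilizer G([ω]) is the largest proper subgroup of G containing the point stabilizer G(ω): every subgroup H with G(ω) ≤ H < G satisfies H ≤ G([ω]). -/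
lemma pair_extend {Ω : Type*} (r : Ω → Ω → Prop) (hequiv : Equivalence r)
    (k : ℕ) (hk : 2 ≤ k) (f : Fin k → Ω)
    (hf : ∀ i j, i ≠ j → ¬ r (f i) (f j))
    (a b : Ω) (hab : ¬ r a b) :
    ∃ g : Fin k → Ω, g ⟨0, by omega⟩ = a ∧ g ⟨1, by omega⟩ = b ∧
      ∀ i j, i ≠ j → ¬ r (g i) (g j) := by
  classical
  set i0 : Fin k := ⟨0, by omega⟩
  set i1 : Fin k := ⟨1, by omega⟩
  set bad : Finset (Fin k) := Finset.univ.filter (fun i => r (f i) a ∨ r (f i) b) with hbad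
  have hcard1 : (Finset.univ.filter (fun i => r (f i) a)).card ≤ 1 := by
    apply Finset.card_le_one.2
    intro x hx y hy
    by_contra hxy
    exact hf x y hxy (hequiv.trans (Finset.mem_filter.1 hx).2
      (hequiv.symm (Finset.mem_filter.1 hy).2))
  have hcard2 : (Finset.univ.filter (fun i => r (f i) b)).card ≤ 1 := by
    apply Finset.card_le_one.2
    intro x hx y hy
    by_contra hxy
    exact hf x y hxy (hequiv.trans (Finset.mem_filter.1 hx).2
      (hequiv.symm (Finset.mem_filter.1 hy).2))
  have hbadcard : bad.card ≤ 2 := by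
    have hsub : bad ⊆ (Finset.univ.filter (fun i => r (f i) a)) ∪
        (Finset.univ.filter (fun i => r (f i) b)) := by
      intro x hx
      rcases (Finset.mem_filter.1 hx).2 with h | h
      · exact Finset.mem_union_left _ (Finset.mem_filter.2 ⟨Finset.mem_univ _, h⟩)
      · exact Finset.mem_union_right _ (Finset.mem_filter.2 ⟨Finset.mem_univ _, h⟩)
    calc bad.card ≤ _ := Finset.card_le_card hsub
      _ ≤ _ + _ := Finset.card_union_le _ _
      _ ≤ 2 := by omega
  have hgoodcard : k - 2 ≤ badᶜ.card := by
    have := Finset.card_compl bad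
    simp [Fintype.card_fin] at this
    omega
  obtain ⟨t, ht, htcard⟩ := Finset.exists_subset_card_eq hgoodcard
  set s : Finset (Fin k) := ({i0, i1} : Finset (Fin k))ᶜ with hs
  have hscard : s.card = k - 2 := by
    rw [hs, Finset.card_compl]
    have h01 : i0 ≠ i1 := by simp [i0, i1, Fin.ext_iff]
    rw [Finset.card_insert_of_notMem (by simp [h01]), Finset.card_singleton]
    simp
  have e : s ≃ t := Finset.equivOfCardEq (by omega)
  have hmem : ∀ i : Fin k, i ≠ i0 → i ≠ i1 → i ∈ s := by
    intro i h0 h1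
    simp [hs, Finset.mem_compl, h0, h1]
  let g : Fin k → Ω := fun i => if h0 : i = i0 then a else if h1 : i = i1 then b
    else f (e ⟨i, hmem i h0 h1⟩)
  have h10 : i1 ≠ i0 := by simp [i0, i1, Fin.ext_iff]
  have hga : g i0 = a := by simp [g]
  have hgb : g i1 = b := by simp [g, h10]
  have hgo : ∀ i (h0 : i ≠ i0) (h1 : i ≠ i1), g i = f (e ⟨i, hmem i h0 h1⟩) := by
    intro i h0 h1; simp [g, h0, h1]
  have hgood : ∀ (x : s), ¬ r (f (e x)) a ∧ ¬ r (f (e x)) b := by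
    intro x
    have := ht (e x).2
    rw [Finset.mem_compl, hbad, Finset.mem_filter] at this
    push_neg at this
    exact this (Finset.mem_univ _)
  refine ⟨g, hga, hgb, ?_⟩
  intro i j hij
  by_cases hi0 : i = i0
  · subst hi0
    by_cases hj1 : j = i1
    · subst hj1; rw [hga, hgb]; exact hab
    · have hj0 : j ≠ i0 := fun h => hij h.symm
      rw [hga, hgo j hj0 hj1]
      exact fun h => (hgood _).1 (hequiv.symm h)
  · by_cases hi1 : i = i1
    · subst hi1
      by_cases hj0 : j = i0
      · subst hj0; rw [hgb, hga]; exact fun h => hab (hequiv.symm h)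
      · have hj1 : j ≠ i1 := fun h => hij h.symm
        rw [hgb, hgo j hj0 hj1]
        exact fun h => (hgood _).2 (hequiv.symm h)
    · rw [hgo i hi0 hi1]
      by_cases hj0 : j = i0
      · subst hj0; rw [hga]; exact (hgood _).1
      · by_cases hj1 : j = i1
        · subst hj1; rw [hgb]; exact (hgood _).2
        · rw [hgo j hj0 hj1]
          exact hf _ _ (fun hE => hij (congrArg Subtype.val (e.injective (Subtype.ext hE))))

lemma two_trans {G Ω : Type*} [Group G] [MulAction G Ω]
    (r : Ω → Ω → Prop) (hequiv : Equivalence r)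
    (k : ℕ) (hk : 2 ≤ k)
    (hblocks : ∃ f : Fin k → Ω, ∀ i j, i ≠ j → ¬ r (f i) (f j))
    (htrans : ∀ f g : Fin k → Ω, (∀ i j, i ≠ j → ¬ r (f i) (f j)) →
      (∀ i j, i ≠ j → ¬ r (g i) (g j)) → ∃ σ : G, ∀ i, σ • f i = g i)
    (a b c d : Ω) (hab : ¬ r a b) (hcd : ¬ r c d) :
    ∃ σ : G, σ • a = c ∧ σ • b = d := by
  obtain ⟨f, hf⟩ := hblocks
  obtain ⟨g1, hg1a, hg1b, hg1⟩ := pair_extend r hequiv k hk f hf a b hab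
  obtain ⟨g2, hg2c, hg2d, hg2⟩ := pair_extend r hequiv k hk f hf c d hcd
  obtain ⟨σ, hσ⟩ := htrans g1 g2 hg1 hg2
  exact ⟨σ, by rw [← hg1a, hσ, hg2c], by rw [← hg1b, hσ, hg2d]⟩

/-- Lemma 2.3: the block stabilizer is the largest proper subgroup containing
the point stabilizer, for a `k`-by-block-transitive action with `k ≥ 2`. -/
theorem stmt_2 {G Ω : Type*} [Group G] [MulAction G Ω] [FaithfulSMul G Ω]
    (r : Ω → Ω → Prop) (hequiv : Equivalence r)
    (k : ℕ) (hk : 2 ≤ k)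
    (hinv : ∀ (g : G) (x y : Ω), r x y → r (g • x) (g • y))
    (hblocks : ∃ f : Fin k → Ω, ∀ i j, i ≠ j → ¬ r (f i) (f j))
    (htrans : ∀ f g : Fin k → Ω, (∀ i j, i ≠ j → ¬ r (f i) (f j)) →
      (∀ i j, i ≠ j → ¬ r (g i) (g j)) → ∃ σ : G, ∀ i, σ • f i = g i)
    (ω : Ω) (H : Subgroup G)
    (hH1 : MulAction.stabilizer G ω ≤ H) (hH2 : H ≠ ⊤) :
    ∀ h ∈ H, r (h • ω) ω := by
  intro h hh
  by_contra hcon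
  apply hH2
  have hinv' : ∀ (g : G) (x y : Ω), ¬ r x y → ¬ r (g • x) (g • y) := by
    intro g x y hxy hr
    exact hxy (by have := hinv g⁻¹ _ _ hr; simpa using this)
  obtain ⟨f, hf⟩ := hblocks
  have h2t := two_trans (G := G) r hequiv k hk ⟨f, hf⟩ htrans
  have case1 : ∀ x : Ω, ¬ r x ω → ∃ h' ∈ H, h' • ω = x := by
    intro x hx
    obtain ⟨σ, hσ1, hσ2⟩ := h2t ω (h • ω) ω x
      (fun hr => hcon (hequiv.symm hr)) (fun hr => hx (hequiv.symm hr))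
    refine ⟨σ * h, ?_, ?_⟩
    · exact H.mul_mem (hH1 (by rwa [MulAction.mem_stabilizer_iff])) hh
    · rw [mul_smul, hσ2]
  have orbit : ∀ x : Ω, ∃ h' ∈ H, h' • ω = x := by
    intro x
    by_cases hx : r x ω
    · have hy : ¬ r (f ⟨0, by omega⟩) x ∨ ¬ r (f ⟨1, by omega⟩) x := by
        by_contra hc; push_neg at hc
        exact hf ⟨0, by omega⟩ ⟨1, by omega⟩ (by simp [Fin.ext_iff])
          (hequiv.trans hc.1 (hequiv.symm hc.2))
      have hy' : ∃ y : Ω, ¬ r y x := by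
        obtain h' | h' := hy
        · exact ⟨_, h'⟩
        · exact ⟨_, h'⟩
      obtain ⟨y, hyx⟩ := hy'
      have hyω : ¬ r y ω := fun hr => hyx (hequiv.trans hr (hequiv.symm hx))
      obtain ⟨h1, hh1, hh1ω⟩ := case1 y hyω
      have hinvy : (h1⁻¹ : G) • y = ω := by rw [← hh1ω]; simp
      have hz : ¬ r (h1⁻¹ • x) ω := by
        rw [← hinvy]
        exact hinv' h1⁻¹ x y (fun hr => hyx (hequiv.symm hr))
      obtain ⟨h2, hh2, hh2ω⟩ := case1 _ hz
      exact ⟨h1 * h2, H.mul_mem hh1 hh2, by rw [mul_smul, hh2ω]; simp⟩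
    · exact case1 x hx
  rw [Subgroup.eq_top_iff']
  intro g
  obtain ⟨h', hh', hh'ω⟩ := orbit (g • ω)
  have hst : h'⁻¹ * g ∈ MulAction.stabilizer G ω := by
    rw [MulAction.mem_stabilizer_iff, mul_smul, ← hh'ω]; simp
  have := H.mul_mem hh' (hH1 hst)
  simpa using this
end

section
/- Let G ≤ Sym(Ω) be block-faithful and k-by-block-transitive (k ≥ 2) with respect to a nontrivial equivalence relation ∼ (blocks have size at least 2), and let N be a nontrivial normal subgroup of G. Then G = N·G(ω) for any ω ∈ Ω, and N is not abelian. -/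
/-- Corollary 2.4: in a block-faithful `k`-by-block-transitive action with
nontrivial blocks, any nontrivial normal subgroup `N` satisfies `G = N·G(ω)`,
and `N` is not abelian. -/
theorem stmt_3 {G Ω : Type*} [Group G] [MulAction G Ω]
    (r : Ω → Ω → Prop) (hequiv : Equivalence r)
    (k : ℕ) (hk : 2 ≤ k)
    (hinv : ∀ (g : G) (x y : Ω), r x y → r (g • x) (g • y))
    (hblocks : ∃ f : Fin k → Ω, ∀ i j, i ≠ j → ¬ r (f i) (f j))
    (htrans : ∀ f g : Fin k → Ω, (∀ i j, i ≠ j → ¬ r (f i) (f j)) →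
      (∀ i j, i ≠ j → ¬ r (g i) (g j)) → ∃ σ : G, ∀ i, σ • f i = g i)
    (hfaithful : ∀ g : G, (∀ x : Ω, r (g • x) x) → g = 1)
    (hnontrivblocks : ∀ x : Ω, ∃ y : Ω, y ≠ x ∧ r x y)
    (N : Subgroup G) (hN : N.Normal) (hNnontriv : N ≠ ⊥) (ω : Ω) :
    (∀ g : G, ∃ m ∈ N, ∃ h : G, h • ω = ω ∧ g = m * h) ∧
    (∃ a ∈ N, ∃ b ∈ N, a * b ≠ b * a) := by
  obtain ⟨f, hf⟩ := hblocks
  -- any family of fewer than k points can be avoided by a point in a new block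
  have hext : ∀ (m : ℕ) (p : Fin m → Ω), m < k → ∃ z : Ω, ∀ i, ¬ r (p i) z := by
    intro m p hm
    by_contra h
    push_neg at h
    choose c hc using h
    have hinj : Function.Injective (fun j : Fin k => c (f j)) := by
      intro j j' hjj'
      by_contra hne
      apply hf j j' hne
      have h1 : r (p (c (f j))) (f j) := hc (f j)
      have h2 : r (p (c (f j))) (f j') := by
        simp only at hjj'; rw [hjj']; exact hc (f j')
      exact hequiv.trans (hequiv.symm h1) h2
    have := Fintype.card_le_of_injective _ hinj
    simp only [Fintype.card_fin] at this
    omega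
  -- any inequivalent pair extends to a k-tuple in pairwise distinct blocks
  have hpair : ∀ a b : Ω, ¬ r a b → ∃ q : Fin k → Ω,
      (∀ i j, i ≠ j → ¬ r (q i) (q j)) ∧ q ⟨0, by omega⟩ = a ∧ q ⟨1, by omega⟩ = b := by
    intro a b hab
    suffices h : ∀ m, 2 ≤ m → m ≤ k → ∃ q : Fin m → Ω,
        (∀ i j, i ≠ j → ¬ r (q i) (q j)) ∧ (∀ (h0 : 0 < m), q ⟨0, h0⟩ = a) ∧
        (∀ (h1 : 1 < m), q ⟨1, h1⟩ = b) by
      obtain ⟨q, h1, h2, h3⟩ := h k hk le_rfl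
      exact ⟨q, h1, h2 (by omega), h3 (by omega)⟩
    intro m
    induction m with
    | zero => omega
    | succ m ih =>
      intro _ hmk
      rcases Nat.lt_or_ge m 2 with hm | hm
      · have hm1 : m = 1 := by omega
        subst hm1
        refine ⟨![a, b], ?_, fun _ => rfl, fun _ => rfl⟩
        intro i j hij
        fin_cases i <;> fin_cases j <;> simp_all
        exact fun h => hab (hequiv.symm h)
      · obtain ⟨q, hq, hq0, hq1⟩ := ih hm (by omega)
        obtain ⟨z, hz⟩ := hext m q (by omega)
        refine ⟨Fin.snoc q z, ?_, ?_, ?_⟩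
        · intro i j hij
          induction i using Fin.lastCases with
          | last =>
            induction j using Fin.lastCases with
            | last => exact absurd rfl hij
            | cast j' =>
              simp only [Fin.snoc_last, Fin.snoc_castSucc]
              exact fun h => hz j' (hequiv.symm h)
          | cast i' =>
            induction j using Fin.lastCases with
            | last =>
              simp only [Fin.snoc_last, Fin.snoc_castSucc]
              exact hz i'
            | cast j' =>
              simp only [Fin.snoc_castSucc]
              exact hq i' j' (fun h => hij (by rw [h]))
        · intro h0
          have he : (⟨0, h0⟩ : Fin (m + 1)) = Fin.castSucc ⟨0, by omega⟩ := rfl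
          rw [he, Fin.snoc_castSucc]
          exact hq0 _
        · intro h1
          have he : (⟨1, h1⟩ : Fin (m + 1)) = Fin.castSucc ⟨1, by omega⟩ := rfl
          rw [he, Fin.snoc_castSucc]
          exact hq1 _
  -- 2-by-block transitivity
  have hmap : ∀ a b c d : Ω, ¬ r a b → ¬ r c d → ∃ σ : G, σ • a = c ∧ σ • b = d := by
    intro a b c d hab hcd
    obtain ⟨p, hp, hp0, hp1⟩ := hpair a b hab
    obtain ⟨q, hq, hq0, hq1⟩ := hpair c d hcd
    obtain ⟨σ, hσ⟩ := htrans p q hp hq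
    exact ⟨σ, by rw [← hp0, hσ, hq0], by rw [← hp1, hσ, hq1]⟩
  -- a nontrivial element of N and a point whose block it moves
  obtain ⟨n, hnN, hn1⟩ : ∃ n ∈ N, n ≠ (1 : G) := by
    by_contra h
    push_neg at h
    exact hNnontriv ((Subgroup.eq_bot_iff_forall N).mpr h)
  obtain ⟨x0, hx0⟩ : ∃ x0 : Ω, ¬ r (n • x0) x0 := by
    by_contra h
    push_neg at h
    exact hn1 (hfaithful n h)
  -- N moves any point to any inequivalent point
  have hmove : ∀ x y : Ω, ¬ r x y → ∃ m ∈ N, m • x = y := by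
    intro x y hxy
    have h1 : ¬ r x0 (n • x0) := fun h => hx0 (hequiv.symm h)
    obtain ⟨σ, hσ1, hσ2⟩ := hmap x0 (n • x0) x y h1 hxy
    refine ⟨σ * n * σ⁻¹, hN.conj_mem n hnN σ, ?_⟩
    have hσx : σ⁻¹ • x = x0 := by rw [← hσ1]; simp
    rw [mul_smul, mul_smul, hσx, hσ2]
  -- N is transitive on Ω
  have htransN : ∀ x y : Ω, ∃ m ∈ N, m • x = y := by
    intro x y
    by_cases hxy : r x y
    · have hz : ∃ z : Ω, ¬ r x z := by
        by_cases h0 : r x (f ⟨0, by omega⟩)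
        · refine ⟨f ⟨1, by omega⟩, fun h => ?_⟩
          exact hf ⟨0, by omega⟩ ⟨1, by omega⟩ (by simp) (hequiv.trans (hequiv.symm h0) h)
        · exact ⟨_, h0⟩
      obtain ⟨z, hxz⟩ := hz
      have hzy : ¬ r z y := fun h => hxz (hequiv.trans hxy (hequiv.symm h))
      obtain ⟨m1, hm1N, hm1⟩ := hmove x z hxz
      obtain ⟨m2, hm2N, hm2⟩ := hmove z y hzy
      exact ⟨m2 * m1, N.mul_mem hm2N hm1N, by rw [mul_smul, hm1, hm2]⟩
    · exact hmove x y hxy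
  constructor
  · intro g
    obtain ⟨m, hmN, hm⟩ := htransN ω (g • ω)
    refine ⟨m, hmN, m⁻¹ * g, ?_, by group⟩
    rw [mul_smul, ← hm, inv_smul_smul]
  · by_contra h
    push_neg at h
    obtain ⟨y, hyω, hry⟩ := hnontrivblocks ω
    obtain ⟨t, htN, ht⟩ := htransN ω y
    have ht1 : t ≠ 1 := fun h' => hyω (by rw [← ht, h', one_smul])
    apply ht1
    apply hfaithful
    intro x
    obtain ⟨m, hmN, hm⟩ := htransN ω x
    have he : t • x = m • y := by
      rw [← hm, ← mul_smul, h t htN m hmN, mul_smul, ht]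
    rw [he, ← hm]
    exact hinv m y ω (hequiv.symm hry)
end

section
/- Let G be a finite group, α an automorphism of G, and H ≤ G with α(H)·H = G. If M is a normal α-invariant subgroup of G with G/M cyclic, then G = M·H. -/
open Subgroup

/-- In a finite cyclic group, a subgroup of cardinality `n` is exactly the set of
elements satisfying `x ^ n = 1`. -/
theorem cyclic_subgroup_eq_setOf {Q : Type*} [Group Q] [Fintype Q] [IsCyclic Q]
    (K : Subgroup Q) : (K : Set Q) = {x : Q | x ^ (Nat.card K) = 1} := by
  classical
  set n := Nat.card K with hn
  have hn0 : 0 < n := Nat.card_pos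
  have hsub : (K : Set Q).toFinset ⊆ ({a : Q | a ^ n = 1} : Set Q).toFinset := by
    intro x hx
    simp only [Set.mem_toFinset, Set.mem_setOf_eq, SetLike.mem_coe] at hx ⊢
    have : orderOf x ∣ n := hn ▸ Subgroup.orderOf_dvd_natCard K hx
    exact orderOf_dvd_iff_pow_eq_one.mp this
  have hcard : ({a : Q | a ^ n = 1} : Set Q).toFinset.card ≤ n := by
    have := IsCyclic.card_pow_eq_one_le (α := Q) hn0
    convert this using 2
    ext x; simp
  have hKcard : (K : Set Q).toFinset.card = n := by
    rw [Set.toFinset_card, hn, Nat.card_eq_fintype_card]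
    exact Fintype.card_congr (Equiv.refl _)
  have heq : (K : Set Q).toFinset = ({a : Q | a ^ n = 1} : Set Q).toFinset :=
    Finset.eq_of_subset_of_card_le hsub (by omega)
  have := congrArg (fun s : Finset Q => (s : Set Q)) heq
  simpa using this

theorem cyclic_subgroup_eq_of_card_eq {Q : Type*} [Group Q] [Finite Q] [IsCyclic Q]
    (A K : Subgroup Q) (h : Nat.card A = Nat.card K) : A = K := by
  cases nonempty_fintype Q
  have hA := cyclic_subgroup_eq_setOf A
  have hK := cyclic_subgroup_eq_setOf K
  rw [h] at hA
  exact SetLike.ext' (hA.trans hK.symm)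

/-- Lemma (abelian intersection, part (i)): if `α(H)H = G` and `M ⊴ G` is
`α`-invariant with `G/M` cyclic, then `G = MH`. -/
theorem stmt_4 {G : Type*} [Group G] [Finite G] (α : G ≃* G)
    (H M : Subgroup G) [hM : M.Normal]
    (hfact : ∀ g : G, ∃ a ∈ H.map α.toMonoidHom, ∃ b ∈ H, g = a * b)
    (hMα : M.map α.toMonoidHom = M)
    (hcyc : IsCyclic (G ⧸ M)) :
    ∀ g : G, ∃ m ∈ M, ∃ b ∈ H, g = m * b := by
  intro g
  set π : G →* G ⧸ M := QuotientGroup.mk' M with hπ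
  set K : Subgroup (G ⧸ M) := H.map π with hK
  set ᾱ : (G ⧸ M) ≃* (G ⧸ M) := QuotientGroup.congr M M α hMα with hᾱ
  -- image of α(H) in the quotient equals K.map ᾱ
  have himg : (H.map α.toMonoidHom).map π = K.map ᾱ.toMonoidHom := by
    ext x
    simp only [Subgroup.mem_map, hK]
    constructor
    · rintro ⟨y, ⟨h, hh, rfl⟩, rfl⟩
      exact ⟨π h, ⟨h, hh, rfl⟩, (QuotientGroup.congr_mk M M α hMα h).symm⟩
    · rintro ⟨y, ⟨h, hh, rfl⟩, rfl⟩
      exact ⟨α h, ⟨h, hh, rfl⟩, QuotientGroup.congr_mk M M α hMα h⟩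
  have hcardeq : Nat.card (K.map ᾱ.toMonoidHom) = Nat.card K := by
    exact Nat.card_congr (Subgroup.equivMapOfInjective K _ ᾱ.injective).symm.toEquiv
  have hAK : K.map ᾱ.toMonoidHom = K := cyclic_subgroup_eq_of_card_eq _ _ hcardeq
  -- now π g ∈ K
  obtain ⟨a, ha, b, hb, rfl⟩ := hfact g
  have hπg : π (a * b) ∈ K := by
    have h1 : π a ∈ K := by
      have : π a ∈ (H.map α.toMonoidHom).map π := ⟨a, ha, rfl⟩
      rwa [himg, hAK] at this
    have h2 : π b ∈ K := ⟨b, hb, rfl⟩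
    rw [map_mul]
    exact K.mul_mem h1 h2
  obtain ⟨h, hh, hhe⟩ := hπg
  -- π h = π (a*b) means (a*b) * h⁻¹ ∈ M
  have hmem : (a * b) * h⁻¹ ∈ M := by
    have : π ((a * b) * h⁻¹) = 1 := by
      rw [map_mul, map_inv, ← hhe, mul_inv_cancel]
    rwa [← QuotientGroup.ker_mk' M, MonoidHom.mem_ker]
  exact ⟨(a * b) * h⁻¹, hmem, h, hh, by group⟩
end

section
/- Let G be a finite group, α an automorphism of G, and H ≤ G with α(H)·H = G. Suppose H ∩ D is α-invariant, where D is the derived subgroup of G. Then N := H ∩ α(H) is a normal subgroup of G, and |G/N| = n², where n = |H : N|. -/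
open scoped Pointwise
open scoped commutatorElement


/-- Lemma (abelian intersection, part (ii)): if `α(H)H = G` and `H ∩ [G,G]` is
`α`-invariant, then `N = H ⊓ α(H)` is normal in `G` and `|G/N| = |H:N|²`. -/
theorem stmt_5 {G : Type*} [Group G] [Finite G] (α : G ≃* G)
    (H : Subgroup G)
    (hfact : ∀ g : G, ∃ a ∈ H.map α.toMonoidHom, ∃ b ∈ H, g = a * b)
    (hHD : α '' ((H : Set G) ∩ (commutator G : Set G)) =
      (H : Set G) ∩ (commutator G : Set G)) :
    (H ⊓ H.map α.toMonoidHom).Normal ∧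
    (H ⊓ H.map α.toMonoidHom).index = ((H ⊓ H.map α.toMonoidHom).relIndex H) ^ 2 := by
  set K := H.map α.toMonoidHom with hK
  set N := H ⊓ K with hN
  -- H ∩ D ⊆ K
  have hsub1 : ∀ x : G, x ∈ H → x ∈ commutator G → x ∈ K := by
    intro x hx hd
    have : x ∈ α '' ((H : Set G) ∩ (commutator G : Set G)) := by
      rw [hHD]; exact ⟨hx, hd⟩
    obtain ⟨y, ⟨hy1, _⟩, hy3⟩ := this
    exact ⟨y, hy1, hy3⟩
  -- K ∩ D ⊆ H
  have hsub2 : ∀ x : G, x ∈ K → x ∈ commutator G → x ∈ H := by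
    intro x hx hd
    obtain ⟨h, hh, rfl⟩ := hx
    have hchar : (commutator G).comap α.toMonoidHom = commutator G :=
      Subgroup.characteristic_iff_comap_eq.mp inferInstance α
    have hhd : h ∈ commutator G := by
      rw [← hchar]; exact hd
    have : α h ∈ α '' ((H : Set G) ∩ (commutator G : Set G)) :=
      ⟨h, ⟨hh, hhd⟩, rfl⟩
    rw [hHD] at this
    exact this.1
  -- Normality
  have hnormal : N.Normal := by
    constructor
    intro n hn g
    obtain ⟨a, ha, b, hb, rfl⟩ := hfact g
    have hm : b * n * b⁻¹ ∈ N := by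
      constructor
      · exact H.mul_mem (H.mul_mem hb hn.1) (H.inv_mem hb)
      · have hc : ⁅b, n⁆ ∈ commutator G := by
          rw [commutator_def]
          exact Subgroup.commutator_mem_commutator (Subgroup.mem_top _) (Subgroup.mem_top _)
        have hcH : ⁅b, n⁆ ∈ H := H.mul_mem (H.mul_mem (H.mul_mem hb hn.1) (H.inv_mem hb))
          (H.inv_mem hn.1)
        have hcK : ⁅b, n⁆ ∈ K := hsub1 _ hcH hc
        have : b * n * b⁻¹ = ⁅b, n⁆ * n := by group
        rw [this]
        exact K.mul_mem hcK hn.2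
    set m := b * n * b⁻¹ with hmdef
    have hg : a * b * n * (a * b)⁻¹ = a * m * a⁻¹ := by
      rw [hmdef]; group
    rw [hg]
    constructor
    · have hc : ⁅a, m⁆ ∈ commutator G := by
        rw [commutator_def]
        exact Subgroup.commutator_mem_commutator (Subgroup.mem_top _) (Subgroup.mem_top _)
      have hcK : ⁅a, m⁆ ∈ K := K.mul_mem (K.mul_mem (K.mul_mem ha hm.2) (K.inv_mem ha))
        (K.inv_mem hm.2)
      have hcH : ⁅a, m⁆ ∈ H := hsub2 _ hcK hc
      have : a * m * a⁻¹ = ⁅a, m⁆ * m := by group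
      rw [this]
      exact H.mul_mem hcH hm.1
    · exact K.mul_mem (K.mul_mem ha hm.2) (K.inv_mem ha)
  refine ⟨hnormal, ?_⟩
  -- Counting
  have hNle : N ≤ H := inf_le_left
  have hNleK : N ≤ K := inf_le_right
  let π := QuotientGroup.mk' N
  let H' := H.map π
  let K' := K.map π
  -- disjointness of images
  have hdisj : Disjoint K' H' := by
    rw [disjoint_iff_inf_le]
    rintro x ⟨⟨k, hk, rfl⟩, ⟨h, hh, hhh⟩⟩
    rw [QuotientGroup.mk'_eq_mk'] at hhh
    obtain ⟨z, hz, rfl⟩ := hhh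
    have hkH : h * z ∈ H := H.mul_mem hh (hNle hz)
    have hkN : h * z ∈ N := ⟨hkH, hk⟩
    have h1 : π (h * z) = 1 := (QuotientGroup.eq_one_iff _).mpr hkN
    simp [h1]
  -- product covers
  have hmul : (K' : Set (G ⧸ N)) * (H' : Set (G ⧸ N)) = Set.univ := by
    ext q
    simp only [Set.mem_univ, iff_true]
    obtain ⟨g, rfl⟩ := QuotientGroup.mk'_surjective N q
    obtain ⟨a, ha, b, hb, rfl⟩ := hfact g
    exact ⟨π a, ⟨a, ha, rfl⟩, π b, ⟨b, hb, rfl⟩, (map_mul π a b).symm⟩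
  have hcomp : Subgroup.IsComplement' K' H' :=
    Subgroup.isComplement'_of_disjoint_and_mul_eq_univ hdisj hmul
  have hcard : Nat.card K' * Nat.card H' = Nat.card (G ⧸ N) := hcomp.card_mul
  -- card of images via first isomorphism theorem
  have cardmap : ∀ L : Subgroup G, N ≤ L →
      Nat.card (L.map π) * Nat.card N = Nat.card L := by
    intro L hL
    let f : L →* G ⧸ N := π.comp L.subtype
    have hker : f.ker = N.subgroupOf L := by
      ext x
      simp [f, MonoidHom.mem_ker, QuotientGroup.eq_one_iff, Subgroup.mem_subgroupOf, π]
    have hrange : f.range = L.map π := by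
      rw [MonoidHom.range_comp, Subgroup.range_subtype]
    have e1 : Nat.card (L.map π) = Nat.card (L ⧸ f.ker) := by
      rw [← hrange]
      exact (Nat.card_congr (QuotientGroup.quotientKerEquivRange f).toEquiv).symm
    have e2 : Nat.card (L ⧸ f.ker) = f.ker.index := (Subgroup.index_eq_card f.ker).symm
    have e3 : Nat.card (N.subgroupOf L) = Nat.card N :=
      Nat.card_congr (Subgroup.subgroupOfEquivOfLe hL).toEquiv
    rw [e1, e2, hker, ← e3]
    exact Subgroup.index_mul_card (N.subgroupOf L)
  have hHK : Nat.card K = Nat.card H :=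
    (Nat.card_congr (H.equivMapOfInjective α.toMonoidHom α.injective).toEquiv).symm
  have hNpos : 0 < Nat.card N := Nat.card_pos
  have hH' : Nat.card H' * Nat.card N = Nat.card H := cardmap H hNle
  have hK' : Nat.card K' * Nat.card N = Nat.card K := cardmap K hNleK
  have hK'H' : Nat.card K' = Nat.card H' := by
    have : Nat.card K' * Nat.card N = Nat.card H' * Nat.card N := by
      rw [hH', hK', hHK]
    exact Nat.eq_of_mul_eq_mul_right hNpos this
  -- relindex
  have hrel : N.relIndex H = Nat.card H' := by
    have h1 : N.relIndex H * Nat.card N = Nat.card H := by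
      rw [Subgroup.relIndex]
      have e3 : Nat.card (N.subgroupOf H) = Nat.card N :=
        Nat.card_congr (Subgroup.subgroupOfEquivOfLe hNle).toEquiv
      rw [← e3]
      exact Subgroup.index_mul_card (N.subgroupOf H)
    exact Nat.eq_of_mul_eq_mul_right hNpos (h1.trans hH'.symm)
  rw [Subgroup.index_eq_card, ← hcard, hK'H', hrel, sq]
end

section
/- Under the hypotheses of the previous abelian-by-cyclic setting, if moreover G = A ⋊ H with H = ⟨h⟩ cyclic, H ∩ sHs = {1} and G = sHs·H, and A is a p-group for some prime p, then writing shs = ah with a ∈ A and n = |A| = |H|, the element b = ∏_{i=0}^{q−1} hⁱ a h⁻ⁱ (where q = n/p) is a nontrivial element of Z(G) ∩ A. -/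
-- valuation of binomial coefficient
private lemma choose_pdvd {p : ℕ} (hp : p.Prime) {n i : ℕ} (h1 : 1 ≤ i) (h2 : i ≤ n) :
    p ^ (n + 1 - i) ∣ (p ^ n).choose i := by
  have hin : i ≤ p ^ n := h2.trans (Nat.lt_pow_self (n := n) hp.one_lt).le
  have hi0 : i ≠ 0 := by omega
  have hv : i.factorization p < i := Nat.factorization_lt p hi0
  have hemu := Nat.Prime.emultiplicity_choose_prime_pow hp hin hi0
  apply pow_dvd_of_le_emultiplicity
  rw [hemu, Nat.multiplicity_eq_factorization hp hi0]
  exact_mod_cast Nat.cast_le.mpr (by omega : n + 1 - i ≤ n - i.factorization p)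

private lemma end_sum_apply {M : Type*} [AddCommMonoid M] {ι : Type*} (s : Finset ι)
    (f : ι → AddMonoid.End M) (x : M) : (∑ i ∈ s, f i) x = ∑ i ∈ s, f i x := by
  induction s using Finset.cons_induction with
  | empty => simp [AddMonoid.End.zero_apply]
  | cons a s ha ih => rw [Finset.sum_cons, Finset.sum_cons, ← ih]; rfl

private lemma key_add {M : Type*} [AddCommGroup M] [Finite M] {p e : ℕ} (hp : p.Prime)
    (hM : Nat.card M = p ^ e) (T : AddMonoid.End M) (hT : T ^ (p ^ e) = 1) :
    T ^ (p ^ (e - 1)) = 1 := by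
  have hchar : ∀ x : M, (p ^ e) • x = 0 := fun x => by
    rw [← hM]; exact card_nsmul_eq_zero'
  have hsmulR : ∀ r : AddMonoid.End M, (p ^ e) • r = 0 := fun r =>
    AddMonoidHom.ext fun x => by
      show (p ^ e) • r x = (0 : AddMonoid.End M) x
      rw [AddMonoid.End.zero_apply, hchar]
  set D : AddMonoid.End M := T - 1 with hD
  have hTD : T = D + 1 := by rw [hD, sub_add_cancel]
  have hexp : ∀ N : ℕ, T ^ N
      = ∑ m ∈ Finset.range (N + 1), D ^ m * ((N.choose m : ℕ) : AddMonoid.End M) := by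
    intro N
    rw [hTD, Commute.add_pow (Commute.one_right D)]
    refine Finset.sum_congr rfl fun m _ => by rw [one_pow, mul_one]
  -- nilpotency of D
  have hzero : ∑ m ∈ Finset.range (p ^ e + 1), D ^ m * (((p ^ e).choose m : ℕ) : AddMonoid.End M)
      = 1 := by rw [← hexp]; exact hT
  set N := p ^ e with hNdef
  have hN1 : 1 ≤ N := Nat.one_le_pow _ _ hp.pos
  have hsum1 : ∑ m ∈ Finset.range N, D ^ (m + 1) * ((N.choose (m + 1) : ℕ) : AddMonoid.End M)
      = 0 := by
    have h0 := hzero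
    rw [Finset.sum_range_succ'] at h0
    simpa using h0
  have hDN : D ^ N
      = - ∑ m ∈ Finset.range (N - 1), D ^ (m + 1) * ((N.choose (m + 1) : ℕ) : AddMonoid.End M) := by
    have h0 := hsum1
    have hN : N = (N - 1) + 1 := by omega
    rw [hN, Finset.sum_range_succ, ← hN] at h0
    rw [Nat.choose_self] at h0
    rw [eq_neg_iff_add_eq_zero]
    rw [Nat.cast_one, mul_one] at h0
    rw [add_comm] at h0
    exact h0
  obtain ⟨W, hW⟩ : ∃ W : AddMonoid.End M, D ^ N = p • W := by
    refine ⟨- ∑ m ∈ Finset.range (N - 1),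
      D ^ (m + 1) * (((N.choose (m + 1)) / p : ℕ) : AddMonoid.End M), ?_⟩
    rw [hDN, neg_nsmul, ← Finset.sum_nsmul]
    congr 1
    refine Finset.sum_congr rfl fun m hm => ?_
    have hdvd : p ∣ N.choose (m + 1) := by
      refine Nat.Prime.dvd_choose_pow hp (by omega) ?_
      rw [Finset.mem_range, hNdef] at hm
      omega
    have hcast : ((N.choose (m + 1) : ℕ) : AddMonoid.End M)
        = (p : AddMonoid.End M) * ((N.choose (m + 1) / p : ℕ) : AddMonoid.End M) := by
      rw [← Nat.cast_mul, Nat.mul_div_cancel' hdvd]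
    rw [hcast, nsmul_eq_mul, ← mul_assoc, ← (Nat.cast_commute (p : ℕ) (D ^ (m + 1))).eq,
      mul_assoc]
  have hDnil : D ^ (N * e) = 0 := by
    rw [pow_mul, hW, smul_pow, hsmulR]
  -- the chain of images
  set B : ℕ → AddSubgroup M := fun i => AddMonoidHom.range (D ^ i) with hB
  have hmem : ∀ (i : ℕ) (x : M), (D ^ i) x ∈ B i := fun i x => ⟨x, rfl⟩
  have hBsucc_le : ∀ i, B (i + 1) ≤ B i := by
    rintro i x ⟨y, rfl⟩
    exact ⟨D y, by rw [pow_succ]; rfl⟩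
  have hBanti : Antitone B := antitone_nat_of_succ_le hBsucc_le
  have hBmap : ∀ i, B (i + 1) = AddSubgroup.map D (B i) := by
    intro i
    ext x
    constructor
    · rintro ⟨y, rfl⟩
      exact ⟨(D ^ i) y, ⟨y, rfl⟩, by rw [pow_succ']; rfl⟩
    · rintro ⟨y, ⟨z, rfl⟩, rfl⟩
      exact ⟨z, by rw [pow_succ']; rfl⟩
  have hBbot : B (N * e) = ⊥ := by
    ext x
    simp only [hB, hDnil, AddSubgroup.mem_bot, AddMonoidHom.mem_range]
    constructor
    · rintro ⟨y, rfl⟩; rfl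
    · rintro rfl; exact ⟨0, rfl⟩
  have hcard : ∀ i, Nat.card (B i) ∣ p ^ (e - i) := by
    intro i
    induction i with
    | zero =>
      have : B 0 = ⊤ := by
        ext x
        simp only [hB, pow_zero, AddSubgroup.mem_top, iff_true, AddMonoidHom.mem_range]
        exact ⟨x, rfl⟩
      rw [this]
      rw [AddSubgroup.card_top, hM]
      exact dvd_refl _
    | succ i IH =>
      by_cases hstab : B (i + 1) = B i
      · have hall : ∀ j, B (i + j) = B i := by
          intro j
          induction j with
          | zero => rfl
          | succ j hj =>
            have : i + (j + 1) = (i + j) + 1 := by omega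
            rw [this, hBmap, hj, ← hBmap, hstab]
        have hbot : B i = ⊥ := by
          have h1 : B i = B (i + N * e) := (hall _).symm
          have h2 : B (i + N * e) ≤ B (N * e) := hBanti (Nat.le_add_left _ _)
          rw [hBbot] at h2
          exact le_bot_iff.mp (h1 ▸ h2)
        have hbot1 : B (i + 1) = ⊥ := le_bot_iff.mp (hbot ▸ hBsucc_le i)
        rw [hbot1]
        simpa using one_dvd _
      · have hlt : B (i + 1) < B i := lt_of_le_of_ne (hBsucc_le i) hstab
        have hclt : Nat.card (B (i + 1)) < Nat.card (B i) := by
          have h2 : ((B (i + 1) : Set M)).ncard < ((B i : Set M)).ncard :=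
            Set.ncard_lt_ncard (by exact_mod_cast hlt) (Set.toFinite _)
          rwa [← Nat.card_coe_set_eq, ← Nat.card_coe_set_eq] at h2
        have hdvd1 : Nat.card (B (i + 1)) ∣ p ^ e := by
          have h3 := AddSubgroup.card_addSubgroup_dvd_card (B (i + 1))
          rwa [hM] at h3
        obtain ⟨s, hse, hcs⟩ := (Nat.dvd_prime_pow hp).mp hdvd1
        have hle : Nat.card (B i) ≤ p ^ (e - i) :=
          Nat.le_of_dvd (pow_pos hp.pos _) IH
        have hps : p ^ s < p ^ (e - i) := by rw [← hcs]; exact hclt.trans_le hle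
        have hs : s < e - i := (Nat.pow_lt_pow_iff_right hp.one_lt).mp hps
        rw [hcs]
        exact Nat.pow_dvd_pow p (by omega)
  have hkill : ∀ (i : ℕ) (x : M), p ^ (e - i) • (D ^ i) x = 0 := by
    intro i x
    obtain ⟨k, hk⟩ := hcard i
    have h0 : Nat.card (B i) • (⟨(D ^ i) x, hmem i x⟩ : B i) = 0 := card_nsmul_eq_zero'
    have h0' : Nat.card (B i) • (D ^ i) x = 0 := congrArg Subtype.val h0
    rw [hk, mul_comm, mul_smul, h0', smul_zero]
  have hBebot : B e = ⊥ := by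
    have := hcard e
    simp only [Nat.sub_self, pow_zero, Nat.dvd_one] at this
    exact AddSubgroup.card_eq_one.mp this
  -- conclusion
  refine DFunLike.ext _ _ fun x => ?_
  rw [hexp (p ^ (e - 1)), end_sum_apply, AddMonoid.End.one_apply]
  have hterm : ∀ m ∈ Finset.range (p ^ (e - 1) + 1), m ≠ 0 →
      (D ^ m * ((p ^ (e - 1)).choose m : ℕ) : AddMonoid.End M) x = 0 := by
    intro m hm hm0
    have happ : (D ^ m * (((p ^ (e - 1)).choose m : ℕ) : AddMonoid.End M)) x
        = ((p ^ (e - 1)).choose m) • (D ^ m) x := by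
      show (D ^ m) ((((p ^ (e - 1)).choose m : ℕ) : AddMonoid.End M) x) = _
      rw [AddMonoid.End.natCast_apply, map_nsmul]
    rw [happ]
    by_cases hme : e ≤ m
    · have h1 : (D ^ m) x ∈ B e := hBanti hme (hmem m x)
      rw [hBebot] at h1
      rw [AddSubgroup.mem_bot] at h1
      rw [h1, smul_zero]
    · have h1m : 1 ≤ m := by omega
      have hmee : m ≤ e - 1 := by omega
      obtain ⟨t, ht⟩ := choose_pdvd hp h1m hmee
      have heq : (e - 1) + 1 - m = e - m := by omega
      rw [heq] at ht
      rw [ht, mul_comm, mul_smul, hkill, smul_zero]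
  rw [Finset.sum_eq_single_of_mem 0 (Finset.mem_range.mpr (by omega)) hterm]
  show (D ^ 0) ((((p ^ (e - 1)).choose 0 : ℕ) : AddMonoid.End M) x) = x
  rw [Nat.choose_zero_right, Nat.cast_one, AddMonoid.End.one_apply, pow_zero,
    AddMonoid.End.one_apply]

private lemma key_mul {A : Type*} [CommGroup A] [Finite A] {p e : ℕ} (hp : p.Prime)
    (hA : Nat.card A = p ^ e) (T : A →* A)
    (hT : ∀ y : A, T^[p ^ e] y = y) (x : A) : T^[p ^ (e - 1)] x = x := by
  let Tadd : AddMonoid.End (Additive A) := MonoidHom.toAdditive T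
  have hiter : ∀ (k : ℕ) (y : A),
      (Tadd ^ k) (Additive.ofMul y) = Additive.ofMul (T^[k] y) := by
    intro k
    induction k with
    | zero => intro y; rfl
    | succ k ih =>
      intro y
      rw [Function.iterate_succ_apply, pow_succ]
      show (Tadd ^ k) (Tadd (Additive.ofMul y)) = _
      exact ih (T y)
  have hcardAdd : Nat.card (Additive A) = p ^ e := by
    rw [← hA]
    exact Nat.card_congr Additive.toMul
  have hTadd : Tadd ^ (p ^ e) = 1 := by
    refine DFunLike.ext _ _ fun z => ?_
    rw [AddMonoid.End.one_apply]
    have := hiter (p ^ e) (Additive.toMul z)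
    rw [hT] at this
    exact this
  have hfin := key_add hp hcardAdd Tadd hTadd
  have h2 : (Tadd ^ (p ^ (e - 1))) (Additive.ofMul x) = Additive.ofMul x := by
    rw [hfin, AddMonoid.End.one_apply]
  rw [hiter] at h2
  exact h2


/-- In a finite `p`-group `G = A ⋊ ⟨h⟩` with `A` abelian of order `pᵉ`,
`⟨h⟩` of order `pᵉ`, an order-2 automorphism `σ` with `σ(⟨h⟩) ∩ ⟨h⟩ = 1` and
`σ(⟨h⟩)·⟨h⟩ = G`, writing `σ h = a·h` with `a ∈ A`, the element
`b = ∏_{i<p^{e-1}} hⁱ a h⁻ⁱ` is a nontrivial element of `Z(G) ∩ A`. -/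
theorem stmt_7 {G : Type*} [Group G] [Finite G]
    (p : ℕ) (hp : p.Prime) (e : ℕ) (he : 1 ≤ e)
    (A : Subgroup G) [nA : A.Normal]
    (habel : ∀ x ∈ A, ∀ y ∈ A, x * y = y * x)
    (h : G)
    (hcardA : Nat.card A = p ^ e)
    (hcardH : Nat.card (Subgroup.zpowers h) = p ^ e)
    (hAH : A ⊓ Subgroup.zpowers h = ⊥)
    (hgen : ∀ g : G, ∃ x ∈ A, ∃ k : ℤ, g = x * h ^ k)
    (σ : G ≃* G) (hσ2 : ∀ g : G, σ (σ g) = g)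
    (hσA : A.map σ.toMonoidHom = A)
    (hσH : (Subgroup.zpowers h).map σ.toMonoidHom ⊓ Subgroup.zpowers h = ⊥)
    (hfact : ∀ g : G, ∃ u ∈ (Subgroup.zpowers h).map σ.toMonoidHom,
      ∃ v ∈ Subgroup.zpowers h, g = u * v)
    (a : G) (ha : a ∈ A) (hσh : σ h = a * h)
    (b : G)
    (hb : b = ((List.range (p ^ (e - 1))).map fun i => h ^ i * a * (h ^ i)⁻¹).prod) :
    b ≠ 1 ∧ b ∈ A ∧ b ∈ Subgroup.center G := by
  have hordh : orderOf h = p ^ e := by rw [← Nat.card_zpowers]; exact hcardH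
  have hhn : h ^ (p ^ e) = 1 := by rw [← hordh]; exact pow_orderOf_eq_one h
  letI : CommGroup ↥A :=
    { (inferInstance : Group ↥A) with
      mul_comm := fun x y => Subtype.ext (habel x.1 x.2 y.1 y.2) }
  set q := p ^ (e - 1) with hqdef
  -- conjugation by h as an endomorphism of A
  let T : ↥A →* ↥A :=
    { toFun := fun x => ⟨h * x.1 * h⁻¹, nA.conj_mem x.1 x.2 h⟩
      map_one' := Subtype.ext (by simp)
      map_mul' := fun x y => Subtype.ext (by
        show h * (x.1 * y.1) * h⁻¹ = (h * x.1 * h⁻¹) * (h * y.1 * h⁻¹)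
        group) }
  have hTiter : ∀ (k : ℕ) (x : ↥A), ((T^[k] x : ↥A) : G) = h ^ k * x.1 * (h ^ k)⁻¹ := by
    intro k
    induction k with
    | zero => intro x; simp
    | succ k ih =>
      intro x
      rw [Function.iterate_succ_apply']
      show h * ((T^[k] x : ↥A) : G) * h⁻¹ = _
      rw [ih, pow_succ']
      group
  have hfix : ∀ x : ↥A, T^[q] x = x := by
    intro x
    refine key_mul hp hcardA T (fun y => ?_) x
    refine Subtype.ext ?_
    rw [hTiter, hhn]
    group
  have hqa : h ^ q * a * (h ^ q)⁻¹ = a := by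
    have h1 := congrArg Subtype.val (hfix ⟨a, ha⟩)
    rwa [hTiter] at h1
  -- partial products
  set P : ℕ → G := fun k => ((List.range k).map fun i => h ^ i * a * (h ^ i)⁻¹).prod with hP
  have hPsucc : ∀ k, P (k + 1) = P k * (h ^ k * a * (h ^ k)⁻¹) := by
    intro k
    simp [hP, List.range_succ]
  have hPA : ∀ k, P k ∈ A := by
    intro k
    induction k with
    | zero => exact A.one_mem
    | succ k ih => rw [hPsucc]; exact A.mul_mem ih (nA.conj_mem a ha (h ^ k))
  have hbP : b = P q := hb
  have hbA : b ∈ A := hbP ▸ hPA q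
  have hσpow : ∀ k : ℕ, σ (h ^ k) = P k * h ^ k := by
    intro k
    induction k with
    | zero => simp [hP]
    | succ k ih =>
      rw [pow_succ, map_mul, ih, hσh, hPsucc]
      group
  -- b ≠ 1
  have hbne : b ≠ 1 := by
    intro hb1
    have h1 : σ (h ^ q) = h ^ q := by rw [hσpow q, ← hbP, hb1, one_mul]
    have h2 : h ^ q ∈ (Subgroup.zpowers h).map σ.toMonoidHom ⊓ Subgroup.zpowers h :=
      ⟨⟨h ^ q, (Subgroup.zpowers h).pow_mem (Subgroup.mem_zpowers h) q, h1⟩,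
        (Subgroup.zpowers h).pow_mem (Subgroup.mem_zpowers h) q⟩
    rw [hσH, Subgroup.mem_bot] at h2
    have h4 : orderOf h ∣ q := orderOf_dvd_of_pow_eq_one h2
    rw [hordh] at h4
    have h5 := Nat.le_of_dvd (pow_pos hp.pos _) h4
    have h6 : p ^ (e - 1) < p ^ e := Nat.pow_lt_pow_right hp.one_lt (by omega)
    omega
  -- b commutes with h
  have hshift : ∀ k, h * P k * h⁻¹ = a⁻¹ * P (k + 1) := by
    intro k
    induction k with
    | zero =>
      show h * P 0 * h⁻¹ = a⁻¹ * P 1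
      have h1 : P 0 = 1 := rfl
      have h2 : P 1 = 1 * (h ^ 0 * a * (h ^ 0)⁻¹) := hPsucc 0
      rw [h1, h2]
      group
    | succ k ih =>
      have hc : h * (h ^ k * a * (h ^ k)⁻¹) * h⁻¹ = h ^ (k + 1) * a * (h ^ (k + 1))⁻¹ := by
        rw [pow_succ']
        group
      rw [hPsucc (k + 1), hPsucc k]
      have hsplit : h * (P k * (h ^ k * a * (h ^ k)⁻¹)) * h⁻¹
          = (h * P k * h⁻¹) * (h * (h ^ k * a * (h ^ k)⁻¹) * h⁻¹) := by group
      rw [hsplit, ih, hc, hPsucc k]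
      group
  have hcomm_h : h * b = b * h := by
    have h1 : h * P q * h⁻¹ = a⁻¹ * (P q * (h ^ q * a * (h ^ q)⁻¹)) := by
      rw [hshift q, hPsucc q]
    rw [hqa] at h1
    have h2 : a * P q = P q * a := habel a ha (P q) (hPA q)
    have h3 : h * P q * h⁻¹ = P q := by
      rw [h1, ← h2]
      group
    rw [hbP]
    calc h * P q = (h * P q * h⁻¹) * h := by group
      _ = P q * h := by rw [h3]
  -- center
  have hbc : b ∈ Subgroup.center G := by
    rw [Subgroup.mem_center_iff]
    intro g
    obtain ⟨x, hx, k, rfl⟩ := hgen g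
    have hbx : x * b = b * x := habel x hx b hbA
    have hbh : Commute b h := hcomm_h.symm
    calc x * h ^ k * b = x * (b * h ^ k) := by rw [mul_assoc, ← (hbh.zpow_right k).eq]
      _ = b * (x * h ^ k) := by rw [← mul_assoc, hbx, mul_assoc]
  exact ⟨hbne, hbA, hbc⟩
end

section
/- Let G = ⟨x,y⟩ be a finite metacyclic group with cyclic normal subgroup ⟨x⟩, embedded in G ⋊ ⟨s⟩ where s has order 2, normalizes ⟨x⟩, and centralizes G/⟨x⟩. Suppose H < G satisfies G = sHs·H, and let N = H ∩ sHs. Then N is normal in G, G = ⟨x⟩·H, and H ∩ ⟨x⟩ is contained in N; moreover |G : H| = |H : N|. -/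
open Finset in
/-- In a finite ambient group, a subgroup `B` of the cyclic group `⟨x⟩` contains every
element of `⟨x⟩` whose `Nat.card B`-th power is trivial. -/
lemma aux_cyclic_mem {K : Type*} [Group K] [Finite K] (x : K) (B : Subgroup K)
    (hBA : B ≤ Subgroup.zpowers x) (a : K) (ha : a ∈ Subgroup.zpowers x)
    (hpow : a ^ Nat.card B = 1) : a ∈ B := by
  classical
  set A : Subgroup K := Subgroup.zpowers x with hA
  haveI : Fintype ↥A := Fintype.ofFinite _
  haveI : IsCyclic ↥A := by
    refine ⟨⟨⟨x, Subgroup.mem_zpowers x⟩, fun z => ?_⟩⟩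
    obtain ⟨k, hk⟩ := Subgroup.mem_zpowers_iff.mp z.2
    exact Subgroup.mem_zpowers_iff.mpr ⟨k, Subtype.ext (by simpa using hk)⟩
  set d : ℕ := Nat.card B with hd
  have hd0 : 0 < d := Nat.card_pos
  have hT : ({z : ↥A | z ^ d = 1} : Finset ↥A).card ≤ d := IsCyclic.card_pow_eq_one_le hd0
  set T : Finset ↥A := {z : ↥A | z ^ d = 1} with hTdef
  have hmemT : ∀ z : ↥A, z ∈ T ↔ z ^ d = 1 := by
    intro z; simp [hTdef, Finset.mem_filter]
  set S : Finset ↥A := T.filter (fun z => (z : K) ∈ B) with hS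
  have hST : S ⊆ T := Finset.filter_subset _ _
  have hpowB : ∀ b : K, b ∈ B → b ^ d = 1 := by
    intro b hb
    have : (⟨b, hb⟩ : ↥B) ^ d = 1 := pow_card_eq_one'
    simpa using congrArg (Subtype.val) this
  have hcardS : S.card = d := by
    have he : ↥B ≃ {z : ↥A // z ∈ S} :=
      { toFun := fun b => ⟨⟨(b : K), hBA b.2⟩, by
          rw [hS, Finset.mem_filter]
          refine ⟨(hmemT _).mpr (Subtype.ext (by simpa using hpowB _ b.2)), b.2⟩⟩
        invFun := fun z => ⟨(z.1 : K), (Finset.mem_filter.mp z.2).2⟩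
        left_inv := fun b => rfl
        right_inv := fun z => rfl }
    rw [hd, Nat.card_congr he, Nat.card_eq_finsetCard]
  have hTS : T = S := (Finset.eq_of_subset_of_card_le hST (by rw [hcardS]; exact hT)).symm
  have : (⟨a, ha⟩ : ↥A) ∈ T := (hmemT _).mpr (Subtype.ext (by simpa using hpow))
  rw [hTS, hS] at this
  exact (Finset.mem_filter.mp this).2

/-- Counting for a "twisted factorization" `G = σ(H)·H`. -/
lemma aux_count {K : Type*} [Group K] (G H N : Subgroup K) (σ : K → K)
    (hσmul : ∀ a b : K, σ (a * b) = σ a * σ b) (hσσ : ∀ a : K, σ (σ a) = a)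
    (hσH : ∀ h ∈ H, σ h ∈ G) (hHG : H ≤ G)
    (hfact : ∀ g ∈ G, ∃ h₁ ∈ H, ∃ h₂ ∈ H, g = σ h₁ * h₂)
    (hNmem : ∀ u : K, u ∈ N ↔ u ∈ H ∧ σ u ∈ H) :
    Nat.card G * Nat.card N = Nat.card H * Nat.card H := by
  classical
  have hσ1 : σ 1 = 1 := by
    have h := hσmul 1 1
    rw [mul_one] at h
    exact (left_eq_mul.mp h)
  have hσinv : ∀ a : K, σ a⁻¹ = (σ a)⁻¹ := by
    intro a
    have h := hσmul a a⁻¹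
    rw [mul_inv_cancel, hσ1] at h
    exact (inv_eq_of_mul_eq_one_right h.symm).symm
  have hNH : N ≤ H := fun u hu => ((hNmem u).mp hu).1
  let f : ↥H × ↥H → ↥G := fun p => ⟨σ p.1 * p.2, mul_mem (hσH _ p.1.2) (hHG p.2.2)⟩
  have hfs : Function.Surjective f := by
    rintro ⟨g, hg⟩
    obtain ⟨h₁, hh₁, h₂, hh₂, rfl⟩ := hfact g hg
    exact ⟨(⟨h₁, hh₁⟩, ⟨h₂, hh₂⟩), rfl⟩
  let c : ↥G → ↥H × ↥H := Function.surjInv hfs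
  have hc : ∀ g : ↥G, f (c g) = g := fun g => Function.surjInv_eq hfs g
  have hcE : ∀ g : ↥G, σ ((c g).1 : K) * ((c g).2 : K) = (g : K) :=
    fun g => congrArg Subtype.val (hc g)
  -- the element used in the forward map lies in `N`
  have humem : ∀ p : ↥H × ↥H, (((c (f p)).1 : K))⁻¹ * (p.1 : K) ∈ N := by
    intro p
    have E : σ ((c (f p)).1 : K) * ((c (f p)).2 : K) = σ (p.1 : K) * (p.2 : K) := hcE (f p)
    refine (hNmem _).mpr ⟨mul_mem (inv_mem (c (f p)).1.2) p.1.2, ?_⟩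
    have key : σ (((c (f p)).1 : K)⁻¹ * (p.1 : K))
        = ((c (f p)).2 : K) * ((p.2 : K))⁻¹ := by
      rw [hσmul, hσinv]
      have h2 : σ (p.1 : K) = σ ((c (f p)).1 : K) * (((c (f p)).2 : K) * ((p.2 : K))⁻¹) := by
        rw [← mul_assoc, E, mul_inv_cancel_right]
      rw [h2, ← mul_assoc, inv_mul_cancel, one_mul]
    rw [key]
    exact mul_mem (c (f p)).2.2 (inv_mem p.2.2)
  have hσN : ∀ u : K, u ∈ N → σ u ∈ H := fun u hu => ((hNmem u).mp hu).2
  let F : ↥H × ↥H → ↥G × ↥N := fun p => (f p, ⟨_, humem p⟩)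
  let Ginv : ↥G × ↥N → ↥H × ↥H := fun q =>
    (⟨((c q.1).1 : K) * (q.2 : K), mul_mem (c q.1).1.2 (hNH q.2.2)⟩,
     ⟨(σ (q.2 : K))⁻¹ * ((c q.1).2 : K), mul_mem (inv_mem (hσN _ q.2.2)) (c q.1).2.2⟩)
  have hleft : Function.LeftInverse Ginv F := by
    intro p
    have E : σ ((c (f p)).1 : K) * ((c (f p)).2 : K) = σ (p.1 : K) * (p.2 : K) := hcE (f p)
    have key : σ (((c (f p)).1 : K)⁻¹ * (p.1 : K))
        = ((c (f p)).2 : K) * ((p.2 : K))⁻¹ := by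
      rw [hσmul, hσinv]
      have h2 : σ (p.1 : K) = σ ((c (f p)).1 : K) * (((c (f p)).2 : K) * ((p.2 : K))⁻¹) := by
        rw [← mul_assoc, E, mul_inv_cancel_right]
      rw [h2, ← mul_assoc, inv_mul_cancel, one_mul]
    refine Prod.ext (Subtype.ext ?_) (Subtype.ext ?_)
    · show ((c (f p)).1 : K) * (((c (f p)).1 : K)⁻¹ * (p.1 : K)) = (p.1 : K)
      group
    · show (σ ((((c (f p)).1 : K))⁻¹ * (p.1 : K)))⁻¹ * ((c (f p)).2 : K) = (p.2 : K)
      rw [key]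
      group
  have hright : Function.RightInverse Ginv F := by
    intro q
    have hfG : f (Ginv q) = q.1 := by
      refine Subtype.ext ?_
      show σ (((c q.1).1 : K) * (q.2 : K)) * ((σ (q.2 : K))⁻¹ * ((c q.1).2 : K)) = (q.1 : K)
      rw [hσmul]
      have : σ ((c q.1).1 : K) * σ (q.2 : K) * ((σ (q.2 : K))⁻¹ * ((c q.1).2 : K))
          = σ ((c q.1).1 : K) * ((c q.1).2 : K) := by group
      rw [this, hcE]
    refine Prod.ext (by exact hfG) (Subtype.ext ?_)
    show ((c (f (Ginv q))).1 : K)⁻¹ * (((c q.1).1 : K) * (q.2 : K)) = (q.2 : K)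
    rw [hfG]
    group
  have e : (↥H × ↥H) ≃ (↥G × ↥N) := ⟨F, Ginv, hleft, hright⟩
  calc Nat.card G * Nat.card N = Nat.card (↥G × ↥N) := (Nat.card_prod _ _).symm
    _ = Nat.card (↥H × ↥H) := (Nat.card_congr e.symm)
    _ = Nat.card H * Nat.card H := Nat.card_prod _ _


/-- First part of Lemma 3.9: in a finite metacyclic group `G = ⟨x,y⟩` with
`⟨x⟩ ⊴ G` cyclic, with an involution `s` normalizing `⟨x⟩` and centralizing
`G/⟨x⟩`, if `H < G` satisfies `G = sHs·H`, then `N = H ∩ sHs` is normal in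
`G`, `G = ⟨x⟩·H`, `H ∩ ⟨x⟩ ≤ N`, and `|G : H| = |H : N|`. -/
theorem stmt_8 {K : Type*} [Group K] [Finite K]
    (x y s : K) (hs2 : s * s = 1)
    (G : Subgroup K) (hG : G = Subgroup.closure ({x, y} : Set K))
    (hxnormal : ∀ g ∈ G, ∀ w ∈ Subgroup.zpowers x, g * w * g⁻¹ ∈ Subgroup.zpowers x)
    (hsx : ∀ w ∈ Subgroup.zpowers x, s * w * s⁻¹ ∈ Subgroup.zpowers x)
    (hsG : ∀ g ∈ G, s * g * s⁻¹ ∈ G)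
    (hscent : ∀ g ∈ G, (s * g * s⁻¹) * g⁻¹ ∈ Subgroup.zpowers x)
    (H : Subgroup K) (hH : H < G)
    (hfact : ∀ g ∈ G, ∃ h₁ ∈ H, ∃ h₂ ∈ H, g = (s * h₁ * s⁻¹) * h₂)
    (N : Subgroup K) (hN : N = H ⊓ H.map (MulAut.conj s).toMonoidHom) :
    (∀ g ∈ G, ∀ w ∈ N, g * w * g⁻¹ ∈ N) ∧
    (∀ g ∈ G, ∃ k : ℤ, ∃ h ∈ H, g = x ^ k * h) ∧
    (H ⊓ Subgroup.zpowers x ≤ N) ∧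
    (H.relIndex G = N.relIndex H) := by
  classical
  set A : Subgroup K := Subgroup.zpowers x with hAdef
  have hsinv : s⁻¹ = s := inv_eq_of_mul_eq_one_right hs2
  have hσσ : ∀ g : K, s * (s * g * s⁻¹) * s⁻¹ = g := by
    intro g
    rw [hsinv]
    calc s * (s * g * s) * s = s * s * g * (s * s) := by group
      _ = g := by rw [hs2]; group
  have hmulσ : ∀ a b : K, s * (a * b) * s⁻¹ = (s * a * s⁻¹) * (s * b * s⁻¹) := by
    intro a b; group
  have hxG : x ∈ G := by rw [hG]; exact Subgroup.subset_closure (by simp)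
  have hyG : y ∈ G := by rw [hG]; exact Subgroup.subset_closure (by simp)
  have hAG : A ≤ G := Subgroup.zpowers_le.mpr hxG
  have hHG : H ≤ G := hH.le
  -- membership in N
  have hNmem : ∀ u : K, u ∈ N ↔ u ∈ H ∧ s * u * s⁻¹ ∈ H := by
    intro u
    rw [hN, Subgroup.mem_inf]
    constructor
    · rintro ⟨h1, h2⟩
      refine ⟨h1, ?_⟩
      obtain ⟨v, hv, hvu⟩ := Subgroup.mem_map.mp h2
      simp only [MulEquiv.coe_toMonoidHom, MulAut.conj_apply] at hvu
      rw [← hvu, hσσ]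
      exact hv
    · rintro ⟨h1, h2⟩
      refine ⟨h1, Subgroup.mem_map.mpr ⟨s * u * s⁻¹, h2, ?_⟩⟩
      simp only [MulEquiv.coe_toMonoidHom, MulAut.conj_apply]
      exact hσσ u
  have hσN : ∀ u ∈ N, s * u * s⁻¹ ∈ N := by
    intro u hu
    obtain ⟨h1, h2⟩ := (hNmem u).mp hu
    exact (hNmem _).mpr ⟨h2, by rw [hσσ]; exact h1⟩
  have hNH : N ≤ H := fun u hu => ((hNmem u).mp hu).1
  -- decomposition G = A ⟨y⟩
  have hdec : ∀ g ∈ G, ∃ a ∈ A, ∃ n : ℤ, g = a * y ^ n := by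
    intro g hg
    have hyn : ∀ n : ℤ, (y : K) ^ n ∈ G := fun n => Subgroup.zpow_mem G hyG n
    let S : Subgroup K :=
      { carrier := {g : K | ∃ a ∈ A, ∃ n : ℤ, g = a * y ^ n}
        one_mem' := ⟨1, one_mem A, 0, by simp⟩
        mul_mem' := by
          rintro g g' ⟨a, ha, m, rfl⟩ ⟨b, hb, n, rfl⟩
          refine ⟨a * (y ^ m * b * (y ^ m)⁻¹), mul_mem ha (hxnormal _ (hyn m) b hb), m + n, ?_⟩
          group
        inv_mem' := by
          rintro g ⟨a, ha, m, rfl⟩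
          refine ⟨(y ^ m)⁻¹ * a⁻¹ * ((y ^ m)⁻¹)⁻¹,
            hxnormal _ (inv_mem (hyn m)) a⁻¹ (inv_mem ha), -m, ?_⟩
          group }
    have hle : G ≤ S := by
      rw [hG]
      refine Subgroup.closure_le S |>.mpr ?_
      rintro z hz
      rcases hz with rfl | rfl
      · exact ⟨z, Subgroup.mem_zpowers z, 0, by simp⟩
      · exact ⟨1, one_mem A, 1, by simp⟩
    exact hle hg
  -- commutators of G lie in A
  have hcomm : ∀ g ∈ G, ∀ g' ∈ G, g * g' * g⁻¹ * g'⁻¹ ∈ A := by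
    intro g hg g' hg'
    obtain ⟨a, ha, m, rfl⟩ := hdec g hg
    obtain ⟨b, hb, n, rfl⟩ := hdec g' hg'
    have heq : a * y ^ m * (b * y ^ n) * (a * y ^ m)⁻¹ * (b * y ^ n)⁻¹
        = a * (y ^ m * b * (y ^ m)⁻¹) * (y ^ n * a⁻¹ * (y ^ n)⁻¹) * b⁻¹ := by group
    rw [heq]
    have hym : (y : K) ^ m ∈ G := Subgroup.zpow_mem G hyG m
    have hynn : (y : K) ^ n ∈ G := Subgroup.zpow_mem G hyG n
    exact mul_mem (mul_mem (mul_mem ha (hxnormal _ hym b hb))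
      (hxnormal _ hynn a⁻¹ (inv_mem ha))) (inv_mem hb)
  -- the subgroup B = H ⊓ A
  set B : Subgroup K := H ⊓ A with hBdef
  have hBA : B ≤ A := inf_le_right
  have hBH : B ≤ H := inf_le_left
  set d : ℕ := Nat.card B with hd
  have hpowB : ∀ b ∈ B, b ^ d = 1 := by
    intro b hb
    have : (⟨b, hb⟩ : ↥B) ^ d = 1 := pow_card_eq_one'
    simpa using congrArg (Subtype.val) this
  have hmemB : ∀ a ∈ A, a ^ d = 1 → a ∈ B := fun a ha hp => aux_cyclic_mem x B hBA a ha hp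
  have hconjpow : ∀ (g b : K) (n : ℕ), (g * b * g⁻¹) ^ n = g * b ^ n * g⁻¹ := by
    intro g b n
    rw [← MulAut.conj_apply, ← map_pow, MulAut.conj_apply]
  have hBnormal : ∀ g ∈ G, ∀ b ∈ B, g * b * g⁻¹ ∈ B := by
    intro g hg b hb
    refine hmemB _ (hxnormal g hg b (hBA hb)) ?_
    rw [hconjpow, hpowB b hb]; group
  have hσB : ∀ b ∈ B, s * b * s⁻¹ ∈ B := by
    intro b hb
    refine hmemB _ (hsx b (hBA hb)) ?_
    rw [hconjpow, hpowB b hb]; group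
  -- the "A-part" of elements of N lies in B
  have haN : ∀ n ∈ N, (s * n * s⁻¹) * n⁻¹ ∈ B := by
    intro n hn
    obtain ⟨h1, h2⟩ := (hNmem n).mp hn
    exact Subgroup.mem_inf.mpr ⟨mul_mem h2 (inv_mem h1), hscent n (hHG h1)⟩
  -- surjectivity of the A-part map
  have hsurj : ∀ a ∈ A, ∃ h ∈ H, ∃ b ∈ B, a = ((s * h * s⁻¹) * h⁻¹) * b := by
    intro a ha
    obtain ⟨h₁, hh₁, h₂, hh₂, hfe⟩ := hfact a (hAG ha)
    refine ⟨h₁, hh₁, h₁ * h₂, ?_, ?_⟩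
    · refine Subgroup.mem_inf.mpr ⟨mul_mem hh₁ hh₂, ?_⟩
      have : h₁ * h₂ = ((s * h₁ * s⁻¹) * h₁⁻¹)⁻¹ * a := by rw [hfe]; group
      rw [this]
      exact mul_mem (inv_mem (hscent h₁ (hHG hh₁))) ha
    · rw [hfe]; group
  -- key: N acts trivially on A modulo B
  have hkey1 : ∀ h ∈ H, ∀ n ∈ N,
      n * ((s * h * s⁻¹) * h⁻¹) * n⁻¹ * ((s * h * s⁻¹) * h⁻¹)⁻¹ ∈ B := by
    intro h hh n hn
    have hnH : n ∈ H := hNH hn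
    have hnG : n ∈ G := hHG hnH
    have hhG : h ∈ G := hHG hh
    -- w = [n⁻¹, h⁻¹]
    have hwH : n⁻¹ * h⁻¹ * n * h ∈ H := by
      exact mul_mem (mul_mem (mul_mem (inv_mem hnH) (inv_mem hh)) hnH) hh
    have hwA : n⁻¹ * h⁻¹ * n * h ∈ A := by
      have := hcomm n⁻¹ (inv_mem hnG) h⁻¹ (inv_mem hhG)
      simpa using this
    have hwB : n⁻¹ * h⁻¹ * n * h ∈ B := Subgroup.mem_inf.mpr ⟨hwH, hwA⟩
    set w : K := n⁻¹ * h⁻¹ * n * h with hwdef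
    have hawB : (s * w * s⁻¹) * w⁻¹ ∈ B := mul_mem (hσB w hwB) (inv_mem hwB)
    have hvG : h * n ∈ G := mul_mem hhG hnG
    have havA : (s * (h * n) * s⁻¹) * (h * n)⁻¹ ∈ A := hscent _ hvG
    -- X = a_u * a_v⁻¹ ∈ B
    have hX : ((s * (n * h) * s⁻¹) * (n * h)⁻¹) * (((s * (h * n) * s⁻¹) * (h * n)⁻¹))⁻¹ ∈ B := by
      have hid : ((s * (n * h) * s⁻¹) * (n * h)⁻¹) * (((s * (h * n) * s⁻¹) * (h * n)⁻¹))⁻¹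
          = ((s * (h * n) * s⁻¹) * (h * n)⁻¹) * ((h * n) * ((s * w * s⁻¹) * w⁻¹) * (h * n)⁻¹)
            * (((s * (h * n) * s⁻¹) * (h * n)⁻¹))⁻¹ := by
        rw [hwdef]; group
      rw [hid]
      exact hBnormal _ (hAG havA) _ (hBnormal _ hvG _ hawB)
    have hanB : (s * n * s⁻¹) * n⁻¹ ∈ B := haN n hn
    have hahA : (s * h * s⁻¹) * h⁻¹ ∈ A := hscent h hhG
    have hid2 : n * ((s * h * s⁻¹) * h⁻¹) * n⁻¹ * ((s * h * s⁻¹) * h⁻¹)⁻¹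
        = ((s * n * s⁻¹) * n⁻¹)⁻¹ *
          ((((s * (n * h) * s⁻¹) * (n * h)⁻¹) * (((s * (h * n) * s⁻¹) * (h * n)⁻¹))⁻¹) *
            (((s * h * s⁻¹) * h⁻¹) * (h * ((s * n * s⁻¹) * n⁻¹) * h⁻¹) *
              (((s * h * s⁻¹) * h⁻¹))⁻¹)) := by group
    rw [hid2]
    exact mul_mem (inv_mem hanB)
      (mul_mem hX (hBnormal _ (hAG hahA) _ (hBnormal _ hhG _ hanB)))
  have hkey : ∀ n ∈ N, ∀ a ∈ A, n * a * n⁻¹ * a⁻¹ ∈ B := by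
    intro n hn a ha
    obtain ⟨h, hh, b, hb, rfl⟩ := hsurj a ha
    have hnG : n ∈ G := hHG (hNH hn)
    have hahA : (s * h * s⁻¹) * h⁻¹ ∈ A := hscent h (hHG hh)
    have hid : n * (((s * h * s⁻¹) * h⁻¹) * b) * n⁻¹ * (((s * h * s⁻¹) * h⁻¹) * b)⁻¹
        = (n * ((s * h * s⁻¹) * h⁻¹) * n⁻¹ * ((s * h * s⁻¹) * h⁻¹)⁻¹) *
          (((s * h * s⁻¹) * h⁻¹) * ((n * b * n⁻¹) * b⁻¹) * (((s * h * s⁻¹) * h⁻¹))⁻¹) := by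
      group
    rw [hid]
    exact mul_mem (hkey1 h hh n hn)
      (hBnormal _ (hAG hahA) _ (mul_mem (hBnormal _ hnG _ hb) (inv_mem hb)))
  -- N is normal in H
  have hNnormalH : ∀ h ∈ H, ∀ n ∈ N, h * n * h⁻¹ ∈ N := by
    intro h hh n hn
    have hnH : n ∈ N := hn
    have hnG : n ∈ G := hHG (hNH hn)
    have hhG : h ∈ G := hHG hh
    have hg₁H : h * n * h⁻¹ ∈ H := mul_mem (mul_mem hh (hNH hn)) (inv_mem hh)
    refine (hNmem _).mpr ⟨hg₁H, ?_⟩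
    -- c = h⁻¹ * a_h * h ∈ A
    have hcA : h⁻¹ * ((s * h * s⁻¹) * h⁻¹) * (h⁻¹)⁻¹ ∈ A :=
      hxnormal h⁻¹ (inv_mem hhG) _ (hscent h hhG)
    set c : K := h⁻¹ * ((s * h * s⁻¹) * h⁻¹) * (h⁻¹)⁻¹ with hcdef
    have hQB : h * (n * c * n⁻¹ * c⁻¹) * h⁻¹ ∈ B :=
      hBnormal h hhG _ (hkey n hn c hcA)
    have hanB : h * ((s * n * s⁻¹) * n⁻¹) * h⁻¹ ∈ B := hBnormal h hhG _ (haN n hn)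
    have hahA : (s * h * s⁻¹) * h⁻¹ ∈ A := hscent h hhG
    have hag₁B : (s * (h * n * h⁻¹) * s⁻¹) * (h * n * h⁻¹)⁻¹ ∈ B := by
      have hid : (s * (h * n * h⁻¹) * s⁻¹) * (h * n * h⁻¹)⁻¹
          = (((s * h * s⁻¹) * h⁻¹) * (h * ((s * n * s⁻¹) * n⁻¹) * h⁻¹) *
              (((s * h * s⁻¹) * h⁻¹))⁻¹) * (h * (n * c * n⁻¹ * c⁻¹) * h⁻¹)⁻¹ := by
        rw [hcdef]; group
      rw [hid]
      exact mul_mem (hBnormal _ (hAG hahA) _ hanB) (inv_mem hQB)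
    have : s * (h * n * h⁻¹) * s⁻¹ = ((s * (h * n * h⁻¹) * s⁻¹) * (h * n * h⁻¹)⁻¹) *
        (h * n * h⁻¹) := by group
    rw [this]
    exact mul_mem (hBH hag₁B) hg₁H
  refine ⟨?_, ?_, ?_, ?_⟩
  -- 1. N normal in G
  · intro g hg n hn
    obtain ⟨h₁, hh₁, h₂, hh₂, rfl⟩ := hfact g hg
    have hn₂ : h₂ * n * h₂⁻¹ ∈ N := hNnormalH h₂ hh₂ n hn
    have hσn₂ : s * (h₂ * n * h₂⁻¹) * s⁻¹ ∈ N := hσN _ hn₂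
    have hn₄ : h₁ * (s * (h₂ * n * h₂⁻¹) * s⁻¹) * h₁⁻¹ ∈ N := hNnormalH h₁ hh₁ _ hσn₂
    have hn₅ : s * (h₁ * (s * (h₂ * n * h₂⁻¹) * s⁻¹) * h₁⁻¹) * s⁻¹ ∈ N := hσN _ hn₄
    have heq : (s * h₁ * s⁻¹) * h₂ * n * ((s * h₁ * s⁻¹) * h₂)⁻¹
        = s * (h₁ * (s * (h₂ * n * h₂⁻¹) * s⁻¹) * h₁⁻¹) * s⁻¹ := by
      rw [hmulσ (h₁ * (s * (h₂ * n * h₂⁻¹) * s⁻¹)) h₁⁻¹,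
        hmulσ h₁ (s * (h₂ * n * h₂⁻¹) * s⁻¹), hσσ (h₂ * n * h₂⁻¹)]
      group
    rw [heq]
    exact hn₅
  -- 2. G = ⟨x⟩ H
  · intro g hg
    obtain ⟨h₁, hh₁, h₂, hh₂, rfl⟩ := hfact g hg
    obtain ⟨k, hk⟩ := Subgroup.mem_zpowers_iff.mp (hscent h₁ (hHG hh₁))
    refine ⟨k, h₁ * h₂, mul_mem hh₁ hh₂, ?_⟩
    rw [hk]
    group
  -- 3. H ⊓ ⟨x⟩ ≤ N
  · intro u hu
    exact (hNmem u).mpr ⟨hBH hu, hBH (hσB u hu)⟩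
  -- 4. index equality
  · have hcount : Nat.card G * Nat.card N = Nat.card H * Nat.card H := by
      refine aux_count G H N (fun g => s * g * s⁻¹) ?_ ?_ ?_ hHG hfact ?_
      · intro a b; exact hmulσ a b
      · intro a; exact hσσ a
      · intro h hh; exact hsG h (hHG hh)
      · intro u; exact hNmem u
    have hHsub : Nat.card (H.subgroupOf G) = Nat.card H :=
      Nat.card_congr (Subgroup.subgroupOfEquivOfLe hHG).toEquiv
    have hNsub : Nat.card (N.subgroupOf H) = Nat.card N :=
      Nat.card_congr (Subgroup.subgroupOfEquivOfLe hNH).toEquiv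
    have h1 : Nat.card H * H.relIndex G = Nat.card G := by
      rw [Subgroup.relIndex, ← hHsub]
      exact Subgroup.card_mul_index (H.subgroupOf G)
    have h2 : Nat.card N * N.relIndex H = Nat.card H := by
      rw [Subgroup.relIndex, ← hNsub]
      exact Subgroup.card_mul_index (N.subgroupOf H)
    have hcH : 0 < Nat.card H := Nat.card_pos
    have hcN : 0 < Nat.card N := Nat.card_pos
    have hmain : Nat.card H * (Nat.card N * (H.relIndex G))
        = Nat.card H * (Nat.card N * (N.relIndex H)) := by
      calc Nat.card H * (Nat.card N * H.relIndex G)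
          = (Nat.card H * H.relIndex G) * Nat.card N := by ring
        _ = Nat.card G * Nat.card N := by rw [h1]
        _ = Nat.card H * Nat.card H := hcount
        _ = Nat.card H * (Nat.card N * N.relIndex H) := by rw [h2]
    exact Nat.eq_of_mul_eq_mul_left hcN (Nat.eq_of_mul_eq_mul_left hcH hmain)
end

section
/- In a finite metacyclic group G = ⟨x⟩ ⋊ ⟨z⟩ with |⟨x⟩| = |⟨z⟩| = n, where z x z⁻¹ = xᵃ, and with an involution s satisfying s x s = x^{k+1} and s z s = xᵇ z, the factorization G = (sHs)H with H = ⟨z⟩ holds if and only if: (a) b is a unit modulo n, and (b) the sequence α(0), α(1), …, α(n−1), where α(t) = Σ_{i=1}^{t} a^{i−1}, runs over all congruence classes modulo n. -/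
/-- In `G = ⟨x⟩ ⋊ ⟨z⟩` with both factors cyclic of order `n`, `z x z⁻¹ = xᵃ`,
and an involution `s` with `s x s = x^{k+1}`, `s z s = xᵇ z`, the factorization
`G = (s⟨z⟩s)·⟨z⟩` holds iff `b` is a unit mod `n` and
`α(0), …, α(n−1)` (with `α(t) = Σ_{i<t} aⁱ`) form a complete residue system mod `n`. -/
theorem stmt_9 {K : Type*} [Group K]
    (n : ℕ) (hn : 0 < n) (x z s : K) (a k b : ℤ)
    (hx : orderOf x = n) (hz : orderOf z = n)
    (hxz : Subgroup.zpowers x ⊓ Subgroup.zpowers z = ⊥)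
    (hconj : z * x * z⁻¹ = x ^ a)
    (hs2 : s * s = 1)
    (hsx : s * x * s⁻¹ = x ^ (k + 1))
    (hsz : s * z * s⁻¹ = x ^ b * z) :
    (∀ g ∈ Subgroup.closure ({x, z} : Set K),
        ∃ h₁ ∈ Subgroup.zpowers z, ∃ h₂ ∈ Subgroup.zpowers z,
          g = s * h₁ * s⁻¹ * h₂) ↔
    (IsUnit (b : ZMod n) ∧
      Function.Surjective
        (fun t : Fin n => ((∑ i ∈ Finset.range t.val, a ^ i : ℤ) : ZMod n))) := by
  set α : ℕ → ℤ := fun t => ∑ i ∈ Finset.range t, a ^ i with hαdef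
  have hzn : z ^ n = 1 := by rw [← hz]; exact pow_orderOf_eq_one z
  -- x ^ c = x ^ d iff c ≡ d in ZMod n
  have hxeq : ∀ c d : ℤ, x ^ c = x ^ d ↔ ((c : ZMod n) = (d : ZMod n)) := by
    intro c d
    rw [zpow_eq_zpow_iff_modEq, hx, ZMod.intCast_eq_intCast_iff]
  -- reduce integer powers of z to natural powers
  have hzred : ∀ c : ℤ, ∃ t : ℕ, t < n ∧ z ^ c = z ^ t := by
    intro c
    have h0 : (0 : ℤ) ≤ c % n := Int.emod_nonneg c (by exact_mod_cast hn.ne')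
    have hlt : c % n < n := Int.emod_lt_of_pos c (by exact_mod_cast hn)
    refine ⟨(c % n).toNat, ?_, ?_⟩
    · omega
    · rw [← zpow_natCast, Int.toNat_of_nonneg h0, ← hz, zpow_mod_orderOf]
  -- basic conjugation
  have hconjc : ∀ c : ℤ, z * x ^ c * z⁻¹ = x ^ (a * c) := by
    intro c
    rw [zpow_mul, ← hconj, conj_zpow]
  have hconjt : ∀ (t : ℕ) (c : ℤ), z ^ t * x ^ c * (z ^ t)⁻¹ = x ^ (a ^ t * c) := by
    intro t
    induction t with
    | zero => intro c; simp
    | succ t ih =>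
      intro c
      have : z ^ (t + 1) * x ^ c * (z ^ (t + 1))⁻¹
          = z ^ t * (z * x ^ c * z⁻¹) * (z ^ t)⁻¹ := by
        rw [pow_succ]; group
      rw [this, hconjc, ih, pow_succ]
      ring_nf
  have hswap : ∀ (t : ℕ) (c : ℤ), z ^ t * x ^ c = x ^ (a ^ t * c) * z ^ t := by
    intro t c
    have := hconjt t c
    calc z ^ t * x ^ c = (z ^ t * x ^ c * (z ^ t)⁻¹) * z ^ t := by group
      _ = x ^ (a ^ t * c) * z ^ t := by rw [this]
  -- powers of x^b * z
  have hxbz : ∀ t : ℕ, (x ^ b * z) ^ t = x ^ (b * α t) * z ^ t := by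
    intro t
    induction t with
    | zero => simp [hαdef]
    | succ t ih =>
      rw [pow_succ, ih, pow_succ]
      have : x ^ (b * α t) * z ^ t * (x ^ b * z)
          = x ^ (b * α t) * (z ^ t * x ^ b) * z := by group
      rw [this, hswap t b, hαdef]
      simp only [Finset.sum_range_succ]
      rw [← mul_assoc, ← zpow_add]
      have : b * (∑ i ∈ Finset.range t, a ^ i) + a ^ t * b
          = b * ((∑ i ∈ Finset.range t, a ^ i) + a ^ t) := by ring
      rw [this]
      group
  have hszt : ∀ t : ℕ, s * z ^ t * s⁻¹ = x ^ (b * α t) * z ^ t := by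
    intro t
    rw [← hxbz, ← hsz, conj_pow]
  -- normal form of elements of the closure
  have hform : ∀ g ∈ Subgroup.closure ({x, z} : Set K), ∃ m r : ℤ, g = x ^ m * z ^ r := by
    intro g hg
    induction hg using Subgroup.closure_induction with
    | mem g hgmem =>
      rcases hgmem with h | h
      · exact ⟨1, 0, by simp [h]⟩
      · exact ⟨0, 1, by simp [Set.mem_singleton_iff.mp h]⟩
    | one => exact ⟨0, 0, by simp⟩
    | mul g h _ _ hg hh =>
      obtain ⟨m, r, rfl⟩ := hg
      obtain ⟨m', r', rfl⟩ := hh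
      obtain ⟨t, _, hzt⟩ := hzred r
      refine ⟨m + a ^ t * m', r + r', ?_⟩
      have hs1 : z ^ r * x ^ m' = x ^ (a ^ t * m') * z ^ r := by
        rw [hzt, hswap t m', ← hzt]
      calc x ^ m * z ^ r * (x ^ m' * z ^ r')
          = x ^ m * (z ^ r * x ^ m') * z ^ r' := by group
        _ = x ^ m * (x ^ (a ^ t * m') * z ^ r) * z ^ r' := by rw [hs1]
        _ = x ^ (m + a ^ t * m') * z ^ (r + r') := by
            rw [zpow_add, zpow_add]; group
    | inv g _ hg =>
      obtain ⟨m, r, rfl⟩ := hg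
      obtain ⟨t, _, hzt⟩ := hzred (-r)
      refine ⟨a ^ t * (-m), -r, ?_⟩
      have hs1 : z ^ (-r) * x ^ (-m) = x ^ (a ^ t * (-m)) * z ^ (-r) := by
        rw [hzt, hswap t (-m), ← hzt]
      calc (x ^ m * z ^ r)⁻¹ = z ^ (-r) * x ^ (-m) := by
            rw [zpow_neg, zpow_neg]; group
        _ = x ^ (a ^ t * (-m)) * z ^ (-r) := hs1
  -- uniqueness
  have huniq : ∀ c d : ℤ, x ^ c * z ^ d = 1 → x ^ c = 1 ∧ z ^ d = 1 := by
    intro c d h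
    have h1 : x ^ c = (z ^ d)⁻¹ := by
      rw [eq_inv_iff_mul_eq_one]; exact h
    have hmem : x ^ c ∈ Subgroup.zpowers x ⊓ Subgroup.zpowers z := by
      refine ⟨Subgroup.mem_zpowers_iff.mpr ⟨c, rfl⟩, ?_⟩
      rw [h1]
      exact Subgroup.mem_zpowers_iff.mpr ⟨-d, by rw [zpow_neg]⟩
    rw [hxz, Subgroup.mem_bot] at hmem
    constructor
    · exact hmem
    · rw [hmem] at h1
      rw [← inv_inv (z ^ d), ← h1, inv_one]
  constructor
  · -- forward direction
    intro H
    have hM : ∀ m : ℤ, ∃ t : ℕ, ((b * α t : ℤ) : ZMod n) = (m : ZMod n) := by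
      intro m
      have hxm : x ^ m ∈ Subgroup.closure ({x, z} : Set K) :=
        zpow_mem (Subgroup.subset_closure (by simp)) m
      obtain ⟨h₁, hh₁, h₂, hh₂, he⟩ := H _ hxm
      obtain ⟨c, rfl⟩ := Subgroup.mem_zpowers_iff.mp hh₁
      obtain ⟨u, rfl⟩ := Subgroup.mem_zpowers_iff.mp hh₂
      obtain ⟨t, _, hzt⟩ := hzred c
      rw [hzt, hszt t] at he
      refine ⟨t, ?_⟩
      have hone : x ^ (m - b * α t) * z ^ (-((t : ℤ) + u)) = 1 := by
        have h2 : x ^ (m - b * α t) = (x ^ (b * α t))⁻¹ * x ^ m := by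
          rw [sub_eq_neg_add, zpow_add, zpow_neg]
        rw [h2, he, zpow_neg, zpow_add, zpow_natCast]
        group
      have hx1 := (huniq _ _ hone).1
      have : x ^ (m - b * α t) = x ^ (0 : ℤ) := by rw [hx1]; simp
      have := (hxeq _ _).mp this
      push_cast at this ⊢
      linear_combination -this
    constructor
    · obtain ⟨t, ht⟩ := hM 1
      push_cast at ht
      exact IsUnit.of_mul_eq_one _ ht
    · -- surjectivity
      obtain ⟨t₁, ht₁⟩ := hM 1
      have hbu : IsUnit ((b : ℤ) : ZMod n) := by
        push_cast at ht₁
        exact IsUnit.of_mul_eq_one _ ht₁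
      have hper : ∀ t : ℕ, ((α (t + n) : ℤ) : ZMod n) = ((α t : ℤ) : ZMod n) := by
        intro t
        have hz2 : z ^ (t + n) = z ^ t := by rw [pow_add, hzn, mul_one]
        have := hszt (t + n)
        rw [hz2, hszt t] at this
        have hxx : x ^ (b * α (t + n)) = x ^ (b * α t) :=
          (mul_right_cancel this).symm
        have := (hxeq _ _).mp hxx
        push_cast at this
        exact hbu.mul_left_cancel this
      have hαmod : ∀ t : ℕ, ((α t : ℤ) : ZMod n) = ((α (t % n) : ℤ) : ZMod n) := by
        intro t
        induction t using Nat.strong_induction_on with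
        | _ t ih =>
          by_cases h : t < n
          · rw [Nat.mod_eq_of_lt h]
          · have h' : t - n + n = t := by omega
            rw [← h', hper (t - n), Nat.add_mod_right]
            exact ih (t - n) (by omega)
      intro cval
      obtain ⟨m, hm⟩ := ZMod.intCast_surjective ((b : ZMod n) * cval)
      obtain ⟨t, ht⟩ := hM m
      refine ⟨⟨t % n, Nat.mod_lt t hn⟩, ?_⟩
      have ht' : ((α t : ℤ) : ZMod n) = cval := by
        push_cast at ht
        rw [hm] at ht
        exact hbu.mul_left_cancel ht
      simp only [hαdef] at hαmod ht' ⊢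
      rw [← hαmod t]
      exact ht'
  · -- reverse direction
    rintro ⟨hbu, hsurj⟩ g hg
    obtain ⟨m, r, rfl⟩ := hform g hg
    obtain ⟨u, hu⟩ := hbu
    obtain ⟨t, ht⟩ := hsurj (((u⁻¹ : (ZMod n)ˣ) : ZMod n) * (m : ZMod n))
    simp only at ht
    have hbm : ((b * α t.val : ℤ) : ZMod n) = (m : ZMod n) := by
      push_cast
      rw [hαdef]
      simp only
      rw [ht, ← hu, ← mul_assoc, Units.mul_inv, one_mul]
    refine ⟨z ^ (t.val), Subgroup.mem_zpowers_iff.mpr ⟨(t.val : ℤ), by rw [zpow_natCast]⟩,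
      z ^ (r - (t.val : ℤ)), Subgroup.mem_zpowers_iff.mpr ⟨r - (t.val : ℤ), rfl⟩, ?_⟩
    rw [hszt t.val, (hxeq _ _).mpr hbm]
    have hzz : z ^ (t.val) * z ^ (r - (t.val : ℤ)) = z ^ r := by
      rw [← zpow_natCast, ← zpow_add]
      congr 1
      ring
    rw [mul_assoc, hzz]
end

section
/- The natural actions of the finite symmetric and alternating groups do not extend properly to 2-by-block-transitive actions: if G = Sym(d) or Alt(d) acts on Ω preserving an equivalence relation ∼, the induced action on blocks is the natural action on d points, and G is transitive on pairs of points in distinct blocks, then the blocks are singletons. -/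
open Equiv Equiv.Perm

private lemma mul_swap_comm {X : Type*} [DecidableEq X] (f : Perm X) (x y : X)
    (hx : f x = x) (hy : f y = y) : f * Equiv.swap x y = Equiv.swap x y * f := by
  ext v
  simp only [Perm.mul_apply]
  rcases eq_or_ne v x with rfl | hvx
  · rw [swap_apply_left, hy, hx, swap_apply_left]
  rcases eq_or_ne v y with rfl | hvy
  · rw [swap_apply_right, hx, hy, swap_apply_right]
  · rw [swap_apply_of_ne_of_ne hvx hvy, swap_apply_of_ne_of_ne]
    · exact fun h => hvx (f.injective (h.trans hx.symm))
    · exact fun h => hvy (f.injective (h.trans hy.symm))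

/-- The embedding of the alternating group of a subtype into the big alternating group. -/
private def altSubHom {X : Type*} [Fintype X] [DecidableEq X] (p : X → Prop) [DecidablePred p] :
    ↥(alternatingGroup {v : X // p v}) →* ↥(alternatingGroup X) :=
  (Equiv.Perm.ofSubtype.comp (alternatingGroup {v : X // p v}).subtype).codRestrict _ (by
    intro f
    simp only [MonoidHom.comp_apply, Subgroup.coe_subtype, mem_alternatingGroup]
    rw [sign_ofSubtype]
    exact mem_alternatingGroup.mp f.2)

private lemma altSubHom_coe {X : Type*} [Fintype X] [DecidableEq X] (p : X → Prop)
    [DecidablePred p] (f : ↥(alternatingGroup {v : X // p v})) :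
    ((altSubHom p f : ↥(alternatingGroup X)) : Perm X) = Equiv.Perm.ofSubtype (f : Perm {v : X // p v}) :=
  rfl

private lemma altSubHom_apply_of_not_mem {X : Type*} [Fintype X] [DecidableEq X] (p : X → Prop)
    [DecidablePred p] (f : ↥(alternatingGroup {v : X // p v})) {v : X} (hv : ¬ p v) :
    ((altSubHom p f : ↥(alternatingGroup X)) : Perm X) v = v := by
  rw [altSubHom_coe]
  exact Equiv.Perm.ofSubtype_apply_of_not_mem _ hv

private lemma exists_altSubHom_eq {X : Type*} [Fintype X] [DecidableEq X] (p : X → Prop)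
    [DecidablePred p] (g : ↥(alternatingGroup X))
    (hfix : ∀ v, ¬ p v → (g : Perm X) v = v) : ∃ f, altSubHom p f = g := by
  have h₁ : ∀ v, p v ↔ p ((g : Perm X) v) := by
    intro v
    constructor
    · intro hv
      by_contra hn
      have h' := (g : Perm X).injective (hfix _ hn)
      rw [h'] at hn
      exact hn hv
    · intro hv
      by_contra hn
      rw [hfix v hn] at hv
      exact hn hv
  have h₂ : ∀ v, (g : Perm X) v ≠ v → p v := fun v hv => by
    by_contra hn
    exact hv (hfix v hn)
  refine ⟨⟨(g : Perm X).subtypePerm (fun v => (h₁ v).symm), ?_⟩, ?_⟩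
  · rw [mem_alternatingGroup]
    have hs := Equiv.Perm.sign_subtypePerm (g : Perm X) (fun v => (h₁ v).symm) h₂
    rw [hs]
    exact mem_alternatingGroup.mp g.2
  · exact Subtype.ext (Equiv.Perm.ofSubtype_subtypePerm (fun v => (h₁ v).symm) h₂)

private lemma alt_simple_of_card_five {T : Type*} [Fintype T] [DecidableEq T]
    (h5 : Fintype.card T = 5) : IsSimpleGroup (alternatingGroup T) := by
  haveI : Nontrivial (alternatingGroup T) :=
    alternatingGroup.nontrivial_of_three_le_card (by rw [Nat.card_eq_fintype_card]; omega)
  obtain ⟨e⟩ : Nonempty (Fin 5 ≃ T) := Fintype.card_eq.mp (by simp [h5])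
  -- the conjugation monoid hom `Perm (Fin 5) →* Perm T`
  let Λ : Perm (Fin 5) →* Perm T :=
    MonoidHom.mk' (fun f => e.permCongr f) (by
      intro f g; ext v; simp [Equiv.permCongr_apply])
  have hsign : ∀ f : Perm (Fin 5), sign (Λ f) = sign f := fun f => sign_permCongr e f
  let Λ' : ↥(alternatingGroup (Fin 5)) →* ↥(alternatingGroup T) :=
    (Λ.comp (alternatingGroup (Fin 5)).subtype).codRestrict _ (by
      intro f
      simp only [MonoidHom.comp_apply, Subgroup.coe_subtype, mem_alternatingGroup]
      rw [hsign]
      exact mem_alternatingGroup.mp f.2)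
  have hsurj : Function.Surjective Λ' := by
    intro h
    refine ⟨⟨e.symm.permCongr (h : Perm T), ?_⟩, ?_⟩
    · rw [mem_alternatingGroup, sign_permCongr]
      exact mem_alternatingGroup.mp h.2
    · apply Subtype.ext
      show Λ (e.symm.permCongr (h : Perm T)) = (h : Perm T)
      ext v
      simp [Λ, Equiv.permCongr_apply]
  exact IsSimpleGroup.isSimpleGroup_of_surjective Λ' hsurj

private lemma alt_simple {T : Type*} [Fintype T] [DecidableEq T]
    (h5 : 5 ≤ Fintype.card T) : IsSimpleGroup (alternatingGroup T) := by
  haveI : Nontrivial (alternatingGroup T) :=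
    alternatingGroup.nontrivial_of_three_le_card (by rw [Nat.card_eq_fintype_card]; omega)
  refine ⟨fun K hK => ?_⟩
  rcases K.bot_or_exists_ne_one with hbot | ⟨k, hkK, hk1⟩
  · exact Or.inl hbot
  right
  have hk'1 : (k : Perm T) ≠ 1 := fun h => hk1 (Subtype.ext h)
  obtain ⟨p, hp⟩ : ∃ p, (k : Perm T) p ≠ p := by
    by_contra h
    push_neg at h
    exact hk'1 (Equiv.ext h)
  have hpq : p ≠ (k : Perm T) p := fun h => hp h.symm
  obtain ⟨r, hrp, hrq, hrkq⟩ :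
      ∃ r, r ≠ p ∧ r ≠ (k : Perm T) p ∧ r ≠ (k : Perm T) ((k : Perm T) p) := by
    by_contra h
    push_neg at h
    have hsub : (Finset.univ : Finset T) ⊆ {p, (k : Perm T) p, (k : Perm T) ((k : Perm T) p)} := by
      intro v _
      rcases eq_or_ne v p with rfl | h1
      · simp
      rcases eq_or_ne v ((k : Perm T) p) with rfl | h2
      · simp
      have := h v h1 h2
      simp [this]
    have hle := Finset.card_le_card hsub
    have h3 : ({p, (k : Perm T) p, (k : Perm T) ((k : Perm T) p)} : Finset T).card ≤ 3 := by
      apply le_trans (Finset.card_insert_le _ _)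
      apply Nat.succ_le_succ
      apply le_trans (Finset.card_insert_le _ _)
      simp
    rw [Finset.card_univ] at hle
    omega
  set k' : Perm T := (k : Perm T)
  set q : T := k' p with hqdef
  -- the 3-cycle γ = (p q r)
  have hγsign : (Equiv.swap p r * Equiv.swap p q).sign = 1 := by
    rw [Equiv.Perm.sign_mul, sign_swap (Ne.symm hrp), sign_swap hpq]
    decide
  set γ : ↥(alternatingGroup T) := ⟨Equiv.swap p r * Equiv.swap p q,
    mem_alternatingGroup.mpr hγsign⟩ with hγdef
  have hγfix : ∀ w, w ≠ p → w ≠ q → w ≠ r → (γ : Perm T) w = w := by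
    intro w h1 h2 h3
    show (Equiv.swap p r) ((Equiv.swap p q) w) = w
    rw [swap_apply_of_ne_of_ne h1 h2, swap_apply_of_ne_of_ne h1 h3]
  have hγp : (γ : Perm T) p = q := by
    show (Equiv.swap p r) ((Equiv.swap p q) p) = q
    rw [swap_apply_left, swap_apply_of_ne_of_ne (Ne.symm hpq) (fun h => hrq h.symm)]
  have hγq : (γ : Perm T) q = r := by
    show (Equiv.swap p r) ((Equiv.swap p q) q) = r
    rw [swap_apply_right, swap_apply_left]
  have hγr : (γ : Perm T) r = p := by
    show (Equiv.swap p r) ((Equiv.swap p q) r) = p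
    rw [swap_apply_of_ne_of_ne hrp hrq, swap_apply_right]
  -- the commutator κ = k γ k⁻¹ γ⁻¹ lies in K, is nontrivial, with support in 5 points
  set κ : ↥(alternatingGroup T) := k * (γ * k⁻¹ * γ⁻¹) with hκdef
  have hκK : κ ∈ K := K.mul_mem hkK (hK.conj_mem _ (K.inv_mem hkK) γ)
  have hκeval : ∀ v : T, (κ : Perm T) v = k' ((γ : Perm T) (k'⁻¹ ((γ : Perm T)⁻¹ v))) := by
    intro v
    simp [hκdef, Perm.mul_apply]
    rfl
  have hγinvr : (γ : Perm T)⁻¹ r = q := by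
    rw [Perm.inv_def, Equiv.symm_apply_eq, hγq]
  have hκr : (κ : Perm T) r = k' q := by
    rw [hκeval, hγinvr]
    have : k'⁻¹ q = p := by rw [Perm.inv_def, Equiv.symm_apply_eq, hqdef]
    rw [this, hγp]
  have hκ1 : κ ≠ 1 := by
    intro h
    rw [h] at hκr
    simp at hκr
    exact hrkq hκr
  -- support of κ is inside P₀
  have hκfix : ∀ v : T, v ≠ p → v ≠ q → v ≠ r → v ≠ k' q → v ≠ k' r → (κ : Perm T) v = v := by
    intro v h1 h2 h3 h4 h5'
    have hγinvv : (γ : Perm T)⁻¹ v = v := by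
      rw [Perm.inv_def, Equiv.symm_apply_eq]
      exact (hγfix v h1 h2 h3).symm
    rw [hκeval, hγinvv]
    have e1 : k'⁻¹ v ≠ p := fun h => h2 (Perm.inv_eq_iff_eq.mp h)
    have e2 : k'⁻¹ v ≠ q := fun h => h4 (Perm.inv_eq_iff_eq.mp h)
    have e3 : k'⁻¹ v ≠ r := fun h => h5' (Perm.inv_eq_iff_eq.mp h)
    rw [hγfix _ e1 e2 e3]; exact Equiv.apply_symm_apply k' v
  -- a 5-element set P containing the support of κ
  obtain ⟨P, hP₀P, -, hPcard⟩ :=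
    Finset.exists_subsuperset_card_eq (Finset.subset_univ ({p, q, r, k' q, k' r} : Finset T))
      (show ({p, q, r, k' q, k' r} : Finset T).card ≤ 5 from
        (Finset.card_insert_le _ _).trans (Nat.succ_le_succ
          ((Finset.card_insert_le _ _).trans (Nat.succ_le_succ
            ((Finset.card_insert_le _ _).trans (Nat.succ_le_succ
              ((Finset.card_insert_le _ _).trans (Nat.succ_le_succ
                (Finset.card_singleton _).le))))))))
      (by rw [Finset.card_univ]; exact h5)
  letI instP : Fintype {v : T // v ∈ P} := Subtype.fintype (fun v => v ∈ P)
  have hpP : p ∈ P := hP₀P (by simp)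
  have hqP : q ∈ P := hP₀P (by simp)
  have hrP : r ∈ P := hP₀P (by simp)
  have hκfixP : ∀ v : T, v ∉ P → (κ : Perm T) v = v := by
    intro v hv
    refine hκfix v ?_ ?_ ?_ ?_ ?_ <;> exact fun h => hv (h ▸ hP₀P (by simp))
  have h₁ : ∀ v : T, v ∈ P ↔ (κ : Perm T) v ∈ P := by
    intro v
    constructor
    · intro hv
      by_contra hn
      have h' : (κ : Perm T) v = v := (κ : Perm T).injective (hκfixP _ hn)
      rw [h'] at hn
      exact hn hv
    · intro hv
      by_contra hn
      rw [hκfixP _ hn] at hv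
      exact hn hv
  have h₂ : ∀ v : T, (κ : Perm T) v ≠ v → v ∈ P := by
    intro v hv
    by_contra hn
    exact hv (hκfixP _ hn)
  -- the embedding of the alternating group on P
  let Ψ : ↥(alternatingGroup {v : T // v ∈ P}) →* ↥(alternatingGroup T) :=
    (Equiv.Perm.ofSubtype.comp (alternatingGroup {v : T // v ∈ P}).subtype).codRestrict _ (by
      intro f
      simp only [MonoidHom.comp_apply, Subgroup.coe_subtype, mem_alternatingGroup]
      rw [sign_ofSubtype]
      exact mem_alternatingGroup.mp f.2)

  have hΨcoe : ∀ f, ((Ψ f : ↥(alternatingGroup T)) : Perm T) = Equiv.Perm.ofSubtype (f : Perm {v : T // v ∈ P}) :=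
    fun f => rfl
  -- κ comes from P
  have hκsub : Equiv.Perm.ofSubtype ((κ : Perm T).subtypePerm (fun v => (h₁ v).symm)) = (κ : Perm T) :=
    Equiv.Perm.ofSubtype_subtypePerm (fun v => (h₁ v).symm) h₂
  have hκ₀mem : (κ : Perm T).subtypePerm (fun v => (h₁ v).symm) ∈ alternatingGroup {v : T // v ∈ P} := by
    have hs : sign ((κ : Perm T).subtypePerm (fun v => (h₁ v).symm)) = sign (κ : Perm T) :=
      Equiv.Perm.sign_subtypePerm _ (fun v => (h₁ v).symm) h₂
    rw [mem_alternatingGroup, hs]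
    exact mem_alternatingGroup.mp κ.2
  set κ₀ : ↥(alternatingGroup {v : T // v ∈ P}) := ⟨(κ : Perm T).subtypePerm (fun v => (h₁ v).symm), hκ₀mem⟩ with hκ₀def
  have hΨκ₀ : Ψ κ₀ = κ := Subtype.ext hκsub
  -- the comap of K under Ψ is a nontrivial normal subgroup of a simple group
  haveI hsimple : IsSimpleGroup (alternatingGroup {v : T // v ∈ P}) :=
    alt_simple_of_card_five ((Fintype.card_coe P).trans hPcard)
  have hKnormal : (K.comap Ψ).Normal := Subgroup.Normal.comap hK Ψ
  have hκ₀K : κ₀ ∈ K.comap Ψ := by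
    rw [Subgroup.mem_comap, hΨκ₀]
    exact hκK
  have htop : K.comap Ψ = ⊤ := by
    rcases hKnormal.eq_bot_or_eq_top with hb | ht
    · exfalso
      rw [hb, Subgroup.mem_bot] at hκ₀K
      apply hκ1
      rw [← hΨκ₀, hκ₀K, map_one]
    · exact ht
  -- hence the 3-cycle γ is in K
  have hγK : γ ∈ K := by
    have hγ₀mem : Equiv.swap (⟨p, hpP⟩ : {v : T // v ∈ P}) ⟨r, hrP⟩ *
        Equiv.swap ⟨p, hpP⟩ ⟨q, hqP⟩ ∈ alternatingGroup {v : T // v ∈ P} := by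
      rw [mem_alternatingGroup, Equiv.Perm.sign_mul, sign_swap, sign_swap]
      · decide
      · exact fun h => hpq (congrArg Subtype.val h)
      · exact fun h => hrp (congrArg Subtype.val h).symm
      
    have : (⟨_, hγ₀mem⟩ : ↥(alternatingGroup {v : T // v ∈ P})) ∈ K.comap Ψ := by
      rw [htop]
      exact Subgroup.mem_top _
    rw [Subgroup.mem_comap] at this
    have hΨγ : Ψ ⟨_, hγ₀mem⟩ = γ := by
      apply Subtype.ext
      rw [hΨcoe]
      show Equiv.Perm.ofSubtype (Equiv.swap _ _ * Equiv.swap _ _) = _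
      rw [map_mul, Equiv.Perm.ofSubtype_swap_eq, Equiv.Perm.ofSubtype_swap_eq]
    rwa [hΨγ] at this
  -- a normal subgroup containing a 3-cycle is everything
  have h3cyc : Equiv.Perm.IsThreeCycle (γ : Perm T) :=
    isThreeCycle_swap_mul_swap_same (fun h => hrp h.symm) hpq (fun h => hrq h)
  haveI := hK
  have hle : Subgroup.normalClosure {(⟨(γ : Perm T), h3cyc.mem_alternatingGroup⟩ :
      ↥(alternatingGroup T))} ≤ K := by
    apply Subgroup.normalClosure_le_normal
    rw [Set.singleton_subset_iff]
    have : (⟨(γ : Perm T), h3cyc.mem_alternatingGroup⟩ : ↥(alternatingGroup T)) = γ :=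
      Subtype.ext rfl
    rw [this]
    exact hγK
  rw [h3cyc.alternating_normalClosure (by rw [Nat.card_eq_fintype_card]; exact h5)] at hle
  exact top_le_iff.mp hle

/-- Corollary 3.5: the natural actions of the finite symmetric and alternating
groups do not extend properly to 2-by-block-transitive actions: if the blocks
are the fibres of a `G`-equivariant surjection `π : Ω → X` (the natural
`d`-point action on blocks) and `G` is transitive on pairs of points in
distinct blocks, then the blocks are singletons. -/
theorem stmt_13 {X Ω : Type*} [Fintype X] [DecidableEq X] [Nontrivial X]
    (G : Subgroup (Equiv.Perm X)) (hG : G = ⊤ ∨ G = alternatingGroup X)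
    [MulAction ↥G Ω] (π : Ω → X) (hπ : Function.Surjective π)
    (hequivariant : ∀ (g : ↥G) (ωp : Ω), π (g • ωp) = (g : Equiv.Perm X) (π ωp))
    (h2bt : ∀ a b c d : Ω, π a ≠ π b → π c ≠ π d →
      ∃ g : ↥G, g • a = c ∧ g • b = d) :
    Function.Injective π := by
  intro b b' hbb'
  obtain ⟨x, hxy⟩ := exists_ne (π b)
  obtain ⟨a, ha⟩ := hπ x
  rcases hG with hGtop | hGalt
  · -- the symmetric group case, via the commuting transposition trick
    have hσmem : Equiv.swap x (π b) ∈ G := by rw [hGtop]; exact Subgroup.mem_top _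
    have hπσa : π ((⟨Equiv.swap x (π b), hσmem⟩ : ↥G) • a) = π b := by
      rw [hequivariant, ha]
      exact Equiv.swap_apply_left x (π b)
    have key : ∀ w : Ω, π w = π b → w = (⟨Equiv.swap x (π b), hσmem⟩ : ↥G) • a := by
      intro w hw
      set σ : ↥G := ⟨Equiv.swap x (π b), hσmem⟩ with hσdef
      obtain ⟨g, hga, hgw⟩ := h2bt a (σ • a) a w
        (by rw [ha, hπσa]; exact hxy) (by rw [ha, hw]; exact hxy)
      have hgx : (g : Perm X) x = x := by
        have h := hequivariant g a
        rw [hga, ha] at h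
        exact h.symm
      have hgy : (g : Perm X) (π b) = π b := by
        have h := hequivariant g (σ • a)
        rw [hgw, hπσa, hw] at h
        exact h.symm
      have hcomm : g * σ = σ * g := by
        apply Subtype.ext
        rw [Subgroup.coe_mul, Subgroup.coe_mul]
        exact mul_swap_comm _ _ _ hgx hgy
      calc w = g • (σ • a) := hgw.symm
        _ = (g * σ) • a := (mul_smul g σ a).symm
        _ = (σ * g) • a := by rw [hcomm]
        _ = σ • (g • a) := mul_smul σ g a
        _ = σ • a := by rw [hga]
    rw [key b rfl, key b' hbb'.symm]
  · -- the alternating group case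
    subst hGalt
    by_contra hbb
    -- the element moving b to b' while fixing a
    obtain ⟨g₀, hg₀a, hg₀b⟩ := h2bt a b a b'
      (by rw [ha]; exact hxy) (by rw [ha, ← hbb']; exact hxy)
    have hg₀x : (g₀ : Perm X) x = x := by
      have h := hequivariant g₀ a
      rw [hg₀a, ha] at h
      exact h.symm
    have hg₀y : (g₀ : Perm X) (π b) = π b := by
      have h := hequivariant g₀ b
      rw [hg₀b, ← hbb'] at h
      exact h.symm
    rcases le_or_gt (Fintype.card X) 4 with hd4 | hd5
    · -- at most 4 points: an even permutation fixing two points is trivial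
      have hsupp : (g₀ : Perm X).support ⊆ Finset.univ \ {x, π b} := by
        intro v hv
        rw [Equiv.Perm.mem_support] at hv
        rw [Finset.mem_sdiff]
        refine ⟨Finset.mem_univ _, ?_⟩
        simp only [Finset.mem_insert, Finset.mem_singleton]
        rintro (rfl | rfl)
        · exact hv hg₀x
        · exact hv hg₀y
      have hcard : (g₀ : Perm X).support.card ≤ 2 := by
        have h1 := Finset.card_le_card hsupp
        rw [Finset.card_sdiff_of_subset (Finset.subset_univ _), Finset.card_univ,
          Finset.card_pair hxy] at h1
        omega
      have hg₀1 : (g₀ : Perm X) = 1 := by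
        rcases Nat.lt_or_ge (g₀ : Perm X).support.card 2 with h | h
        · exact Equiv.Perm.card_support_le_one.mp (by omega)
        · exfalso
          have h2 : (g₀ : Perm X).support.card = 2 := le_antisymm hcard h
          obtain ⟨u, v, huv, heq⟩ := Equiv.Perm.card_support_eq_two.mp h2
          have hs := mem_alternatingGroup.mp g₀.2
          rw [heq, sign_swap huv] at hs
          exact absurd hs (by decide)
      apply hbb
      have : g₀ = (1 : ↥(alternatingGroup X)) := Subtype.ext hg₀1
      rw [this, one_smul] at hg₀b
      exact hg₀b
    -- at least 5 points: pick a third block z and the 3-cycle c = (x, π b, z)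
    obtain ⟨z, hzx, hzy⟩ : ∃ z, z ≠ x ∧ z ≠ π b := by
      by_contra h
      push_neg at h
      have hsub : (Finset.univ : Finset X) ⊆ {x, π b} := by
        intro v _
        rcases eq_or_ne v x with rfl | h1
        · simp
        · simp [h v h1]
      have hle := Finset.card_le_card hsub
      rw [Finset.card_univ, Finset.card_pair hxy] at hle
      omega
    have hcsign : (Equiv.swap x z * Equiv.swap x (π b)).sign = 1 := by
      rw [Equiv.Perm.sign_mul, sign_swap (Ne.symm hzx), sign_swap hxy]
      decide
    set c : ↥(alternatingGroup X) := ⟨Equiv.swap x z * Equiv.swap x (π b),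
      mem_alternatingGroup.mpr hcsign⟩ with hcdef
    have hcx : (c : Perm X) x = π b := by
      show (Equiv.swap x z) ((Equiv.swap x (π b)) x) = π b
      rw [swap_apply_left, swap_apply_of_ne_of_ne (Ne.symm hxy) (fun h => hzy h.symm)]
    have hcardT2 : Fintype.card {v : X // v ≠ x ∧ v ≠ π b} = Fintype.card X - 2 := by
      rw [Fintype.card_subtype]
      have hfil : Finset.univ.filter (fun v => v ≠ x ∧ v ≠ π b) = Finset.univ \ {x, π b} := by
        ext v
        simp only [Finset.mem_filter, Finset.mem_univ, true_and, Finset.mem_sdiff,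
          Finset.mem_insert, Finset.mem_singleton]
        tauto
      rw [hfil, Finset.card_sdiff_of_subset (Finset.subset_univ _), Finset.card_univ,
        Finset.card_pair hxy]
    -- both fibers have at least two elements
    haveI hneFy : Nonempty ↥(π ⁻¹' {π b}) := ⟨⟨b, by simp⟩⟩
    haveI hneFx : Nonempty ↥(π ⁻¹' {x}) := ⟨⟨a, by simp [ha]⟩⟩
    have hntFy : Nontrivial ↥(π ⁻¹' {π b}) :=
      ⟨⟨⟨b, by simp⟩, ⟨b', by simp [hbb'.symm]⟩, fun h => hbb (congrArg Subtype.val h)⟩⟩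
    have hntFx : Nontrivial ↥(π ⁻¹' {x}) := by
      have hπc : ∀ w : Ω, π w = π b → π ((c⁻¹ : ↥(alternatingGroup X)) • w) = x := by
        intro w hw
        rw [hequivariant, hw]
        show ((c : Perm X))⁻¹ (π b) = x
        exact Perm.inv_eq_iff_eq.mpr hcx.symm
      exact ⟨⟨⟨c⁻¹ • b, hπc b rfl⟩, ⟨c⁻¹ • b', hπc b' hbb'.symm⟩,
        fun h => hbb (MulAction.injective _ (congrArg Subtype.val h))⟩⟩
    rcases Nat.lt_or_ge (Fintype.card X) 6 with hd5' | hd6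
    · -- exactly 5 points
      have hd5eq : Fintype.card X = 5 := by omega
      have hcardT2' : Fintype.card {v : X // v ≠ x ∧ v ≠ π b} = 3 := by
        rw [hcardT2, hd5eq]
      haveI : Nontrivial {v : X // v ≠ x ∧ v ≠ π b} :=
        Fintype.one_lt_card_iff_nontrivial.mp (by rw [hcardT2']; omega)
      have hcardA2 : Nat.card ↥(alternatingGroup {v : X // v ≠ x ∧ v ≠ π b}) = 3 := by
        rw [Nat.card_eq_fintype_card]
        have h2m := two_mul_card_alternatingGroup (α := {v : X // v ≠ x ∧ v ≠ π b})
        rw [Fintype.card_perm, hcardT2'] at h2m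
        rw [show (3:ℕ).factorial = 6 from rfl] at h2m
        omega
      have hmemFx : ∀ f : ↥(alternatingGroup {v : X // v ≠ x ∧ v ≠ π b}),
          (altSubHom (fun v => v ≠ x ∧ v ≠ π b) f) • a ∈ π ⁻¹' {x} := by
        intro f
        simp only [Set.mem_preimage, Set.mem_singleton_iff]
        rw [hequivariant, ha]
        exact altSubHom_apply_of_not_mem _ f (by simp)
      have hmemFy : ∀ f : ↥(alternatingGroup {v : X // v ≠ x ∧ v ≠ π b}),
          (altSubHom (fun v => v ≠ x ∧ v ≠ π b) f) • b ∈ π ⁻¹' {π b} := by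
        intro f
        simp only [Set.mem_preimage, Set.mem_singleton_iff]
        rw [hequivariant]
        exact altSubHom_apply_of_not_mem _ f (by simp)
      set θ : ↥(alternatingGroup {v : X // v ≠ x ∧ v ≠ π b}) →
          ↥(π ⁻¹' {x}) × ↥(π ⁻¹' {π b}) :=
        fun f => (⟨_, hmemFx f⟩, ⟨_, hmemFy f⟩) with hθdef
      have hθsurj : Function.Surjective θ := by
        rintro ⟨⟨a', ha'⟩, ⟨b'', hb''⟩⟩
        rw [Set.mem_preimage, Set.mem_singleton_iff] at ha' hb''
        obtain ⟨g, hga, hgb⟩ := h2bt a b a' b'' (by rw [ha]; exact hxy)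
          (by rw [ha', hb'']; exact hxy)
        have hgx : (g : Perm X) x = x := by
          have h := hequivariant g a
          rw [hga, ha, ha'] at h
          exact h.symm
        have hgy : (g : Perm X) (π b) = π b := by
          have h := hequivariant g b
          rw [hgb, hb''] at h
          exact h.symm
        obtain ⟨f, hf⟩ := exists_altSubHom_eq (fun v => v ≠ x ∧ v ≠ π b) g (by
          intro v hv
          rcases not_and_or.mp hv with h | h
          · rw [not_ne_iff.mp h]; exact hgx
          · rw [not_ne_iff.mp h]; exact hgy)
        refine ⟨f, ?_⟩
        rw [hθdef]
        refine Prod.ext (Subtype.ext ?_) (Subtype.ext ?_)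
        · show (altSubHom (fun v => v ≠ x ∧ v ≠ π b) f) • a = a'
          rw [hf]; exact hga
        · show (altSubHom (fun v => v ≠ x ∧ v ≠ π b) f) • b = b''
          rw [hf]; exact hgb
      haveI : Finite (↥(π ⁻¹' {x}) × ↥(π ⁻¹' {π b})) := Finite.of_surjective θ hθsurj
      haveI : Finite ↥(π ⁻¹' {x}) := Finite.prod_left ↥(π ⁻¹' {π b})
      haveI : Finite ↥(π ⁻¹' {π b}) := Finite.prod_right ↥(π ⁻¹' {x})
      have hle := Nat.card_le_card_of_surjective θ hθsurj
      rw [Nat.card_prod, hcardA2] at hle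
      have h2y : 2 ≤ Nat.card ↥(π ⁻¹' {π b}) := Finite.one_lt_card_iff_nontrivial.mpr hntFy
      have h2x : 2 ≤ Nat.card ↥(π ⁻¹' {x}) := Finite.one_lt_card_iff_nontrivial.mpr hntFx
      have := Nat.mul_le_mul h2x h2y
      omega
    · -- at least 6 points
      -- Step 1 : the fiber of π b injects into X ∖ {x, π b}
      have hπb₀ : π (c • a) = π b := by rw [hequivariant, ha]; exact hcx
      have hchoice : ∀ s : ↥(π ⁻¹' {π b}),
          ∃ g : ↥(alternatingGroup X), g • a = a ∧ g • (c • a) = ↑s := by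
        intro s
        exact h2bt a (c • a) a ↑s (by rw [ha, hπb₀]; exact hxy)
          (by rw [ha, s.2]; exact hxy)
      choose gs hgs1 hgs2 using hchoice
      have hgsx : ∀ s, ((gs s : ↥(alternatingGroup X)) : Perm X) x = x := by
        intro s
        have h := hequivariant (gs s) a
        rw [hgs1 s, ha] at h
        exact h.symm
      have hgsy : ∀ s, ((gs s : ↥(alternatingGroup X)) : Perm X) (π b) = π b := by
        intro s
        have h := hequivariant (gs s) (c • a)
        rw [hgs2 s, hπb₀, s.2] at h
        exact h.symm
      set Φ : ↥(π ⁻¹' {π b}) → {v : X // v ≠ x ∧ v ≠ π b} := fun s =>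
        ⟨((gs s : ↥(alternatingGroup X)) : Perm X) z,
          fun h => hzx (((gs s : ↥(alternatingGroup X)) : Perm X).injective
            (h.trans (hgsx s).symm)),
          fun h => hzy (((gs s : ↥(alternatingGroup X)) : Perm X).injective
            (h.trans (hgsy s).symm))⟩ with hΦdef
      have hΦinj : Function.Injective Φ := by
        intro s t h
        have hval : ((gs s : ↥(alternatingGroup X)) : Perm X) z
            = ((gs t : ↥(alternatingGroup X)) : Perm X) z := congrArg Subtype.val h
        set g := gs s
        set k := gs t
        have hhx : (((k⁻¹ * g : ↥(alternatingGroup X))) : Perm X) x = x := by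
          rw [Subgroup.coe_mul]
          show ((k : Perm X)⁻¹) (((g : ↥(alternatingGroup X)) : Perm X) x) = x
          rw [hgsx s]
          exact Perm.inv_eq_iff_eq.mpr (hgsx t).symm
        have hhy : (((k⁻¹ * g : ↥(alternatingGroup X))) : Perm X) (π b) = π b := by
          rw [Subgroup.coe_mul]
          show ((k : Perm X)⁻¹) (((g : ↥(alternatingGroup X)) : Perm X) (π b)) = π b
          rw [hgsy s]
          exact Perm.inv_eq_iff_eq.mpr (hgsy t).symm
        have hhz : (((k⁻¹ * g : ↥(alternatingGroup X))) : Perm X) z = z := by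
          rw [Subgroup.coe_mul]
          show ((k : Perm X)⁻¹) (((g : ↥(alternatingGroup X)) : Perm X) z) = z
          rw [hval]
          exact Equiv.symm_apply_apply _ _
        have hcomm : (k⁻¹ * g) * c = c * (k⁻¹ * g) := by
          apply Subtype.ext
          rw [Subgroup.coe_mul, Subgroup.coe_mul]
          show ((k⁻¹ * g : ↥(alternatingGroup X)) : Perm X) * (Equiv.swap x z * Equiv.swap x (π b))
            = (Equiv.swap x z * Equiv.swap x (π b)) * ((k⁻¹ * g : ↥(alternatingGroup X)) : Perm X)
          rw [← mul_assoc, mul_swap_comm _ _ _ hhx hhz, mul_assoc,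
            mul_swap_comm _ _ _ hhx hhy, ← mul_assoc]
        have h1 : (k⁻¹ * g) • a = a := by
          rw [mul_smul, hgs1 s]
          exact inv_smul_eq_iff.mpr (hgs1 t).symm
        have h2 : (k⁻¹ * g) • (c • a) = c • a := by
          rw [← mul_smul, hcomm, mul_smul, h1]
        apply Subtype.ext
        calc (s : Ω) = g • (c • a) := (hgs2 s).symm
          _ = (k * (k⁻¹ * g)) • (c • a) := by rw [mul_inv_cancel_left]
          _ = k • ((k⁻¹ * g) • (c • a)) := mul_smul _ _ _
          _ = k • (c • a) := by rw [h2]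
          _ = (t : Ω) := hgs2 t
      letI instFy : Fintype ↥(π ⁻¹' {π b}) := Fintype.ofInjective Φ hΦinj
      have hcardFy : Fintype.card ↥(π ⁻¹' {π b}) ≤ Fintype.card X - 2 := by
        rw [← hcardT2]
        exact Fintype.card_le_of_injective Φ hΦinj
      -- Step 2 : the alternating group on X ∖ {π b} acts on the fiber of π b
      have hcardT1 : Fintype.card {v : X // v ≠ π b} = Fintype.card X - 1 := by
        rw [Fintype.card_subtype]
        have hfil : Finset.univ.filter (fun v => v ≠ π b) = Finset.univ \ {π b} := by
          ext v
          simp [Finset.mem_sdiff]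
        rw [hfil, Finset.card_sdiff_of_subset (Finset.subset_univ _), Finset.card_univ,
          Finset.card_singleton]
      letI : DecidableEq ↥(π ⁻¹' {π b}) := Classical.decEq _
      haveI : Nontrivial {v : X // v ≠ π b} :=
        Fintype.one_lt_card_iff_nontrivial.mp (by rw [hcardT1]; omega)
      haveI hsimp : IsSimpleGroup ↥(alternatingGroup {v : X // v ≠ π b}) :=
        alt_simple (by rw [hcardT1]; omega)
      have hmemFy' : ∀ (f : ↥(alternatingGroup {v : X // v ≠ π b})) (s : ↥(π ⁻¹' {π b})),
          (altSubHom (fun v => v ≠ π b) f) • (s : Ω) ∈ π ⁻¹' {π b} := by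
        intro f s
        simp only [Set.mem_preimage, Set.mem_singleton_iff]
        rw [hequivariant, s.2]
        exact altSubHom_apply_of_not_mem _ f (by simp)
      let Θ : ↥(alternatingGroup {v : X // v ≠ π b}) →* Perm ↥(π ⁻¹' {π b}) :=
        MonoidHom.mk' (fun f =>
          { toFun := fun s => ⟨(altSubHom (fun v => v ≠ π b) f) • ↑s, hmemFy' f s⟩
            invFun := fun s => ⟨(altSubHom (fun v => v ≠ π b) f⁻¹) • ↑s, hmemFy' f⁻¹ s⟩
            left_inv := fun s => Subtype.ext (by
              show (altSubHom (fun v => v ≠ π b) f⁻¹) •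
                ((altSubHom (fun v => v ≠ π b) f) • (s : Ω)) = ↑s
              rw [← mul_smul, ← map_mul, inv_mul_cancel, map_one, one_smul])
            right_inv := fun s => Subtype.ext (by
              show (altSubHom (fun v => v ≠ π b) f) •
                ((altSubHom (fun v => v ≠ π b) f⁻¹) • (s : Ω)) = ↑s
              rw [← mul_smul, ← map_mul, mul_inv_cancel, map_one, one_smul]) })
          (fun f g => Equiv.ext fun s => Subtype.ext (by
            show (altSubHom (fun v => v ≠ π b) (f * g)) • (s : Ω)
              = (altSubHom (fun v => v ≠ π b) f) • ((altSubHom (fun v => v ≠ π b) g) • ↑s)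
            rw [map_mul, mul_smul]))
      rcases (MonoidHom.normal_ker Θ).eq_bot_or_eq_top with hker | hker
      · -- the action is faithful : cardinality contradiction
        have hinj : Function.Injective Θ := (MonoidHom.ker_eq_bot_iff Θ).mp hker
        have hcle : Fintype.card ↥(alternatingGroup {v : X // v ≠ π b}) ≤
            Fintype.card (Perm ↥(π ⁻¹' {π b})) := Fintype.card_le_of_injective Θ hinj
        rw [Fintype.card_perm] at hcle
        have h2m := two_mul_card_alternatingGroup (α := {v : X // v ≠ π b})
        rw [Fintype.card_perm, hcardT1] at h2m
        have hfle : (Fintype.card ↥(π ⁻¹' {π b})).factorial ≤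
            (Fintype.card X - 2).factorial := Nat.factorial_le hcardFy
        have hfact : (Fintype.card X - 1).factorial =
            (Fintype.card X - 1) * (Fintype.card X - 2).factorial := by
          rw [show Fintype.card X - 1 = (Fintype.card X - 2) + 1 by omega, Nat.factorial_succ]
        have hpos : 0 < (Fintype.card X - 2).factorial := Nat.factorial_pos _
        have h' : (Fintype.card X - 1) * (Fintype.card X - 2).factorial ≤
            2 * (Fintype.card X - 2).factorial := by omega
        have hle2 : Fintype.card X - 1 ≤ 2 := Nat.le_of_mul_le_mul_left (by
          rw [Nat.mul_comm (Fintype.card X - 1), Nat.mul_comm 2] at h'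
          exact h') hpos
        omega
      · -- the action is trivial : but g₀ moves b to b'
        obtain ⟨f₀, hf₀⟩ := exists_altSubHom_eq (fun v => v ≠ π b) g₀ (by
          intro v hv
          rw [not_ne_iff.mp hv]
          exact hg₀y)
        have hf₀ker : f₀ ∈ Θ.ker := by rw [hker]; exact Subgroup.mem_top _
        have hΘ1 : Θ f₀ = 1 := MonoidHom.mem_ker.mp hf₀ker
        have heval := congrArg (fun (e : Perm ↥(π ⁻¹' {π b})) => ((e ⟨b, by simp⟩ : ↥(π ⁻¹' {π b})) : Ω)) hΘ1
        simp only [Perm.coe_one, id_eq] at heval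
        have hval : (altSubHom (fun v => v ≠ π b) f₀) • b = b := heval
        rw [hf₀, hg₀b] at hval
        exact hbb hval.symm
end

section
/- Let G = Sp_{2m}(2) (m ≥ 3) in either of its two standard 2-transitive actions on Ω±. Then for any two distinct points ω, ω', the setwise stabilizer of the unordered pair splits as a direct product G({ω,ω'}) = G(ω,ω') × ⟨s⟩, where s is an involution in G swapping ω and ω' and centralizing G(ω,ω'). -/
private def chi2 : ZMod 2 → ℤ := fun a => if a = 0 then 1 else -1

private lemma chi2_add : ∀ a b : ZMod 2, chi2 (a + b) = chi2 a * chi2 b := by decide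

private lemma chi2_zero : chi2 0 = 1 := rfl

private lemma chi2_one : chi2 1 = -1 := rfl

/-- Lemma 3.6: for `G = Sp_{2m}(2)` with `m ≥ 3` in either of its two standard
2-transitive actions (on quadratic forms `θ` polarizing the symplectic form
`φ`, with `g • θ = θ ∘ g⁻¹`), the setwise stabilizer of an unordered pair of
distinct points `{θ, θ'}` in the same orbit splits as the direct product of the
pointwise stabilizer with `⟨s⟩` for an involution `s` swapping `θ` and `θ'`
and centralizing the pointwise stabilizer. -/
theorem stmt_16 {V : Type*} [AddCommGroup V] [Module (ZMod 2) V]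
    [FiniteDimensional (ZMod 2) V]
    (m : ℕ) (hm : 3 ≤ m) (hdim : Module.finrank (ZMod 2) V = 2 * m)
    (φ : V →ₗ[ZMod 2] V →ₗ[ZMod 2] ZMod 2)
    (halt : ∀ u : V, φ u u = 0)
    (hnd : ∀ u : V, (∀ v : V, φ u v = 0) → u = 0)
    (θ θ' : V → ZMod 2)
    (hθ : ∀ u v : V, φ u v = θ (u + v) - θ u - θ v)
    (hθ' : ∀ u v : V, φ u v = θ' (u + v) - θ' u - θ' v)
    (hne : θ ≠ θ')
    (horbit : ∃ g : V ≃ₗ[ZMod 2] V, (∀ u v : V, φ (g u) (g v) = φ u v) ∧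
      ∀ u : V, θ' u = θ (g.symm u)) :
    ∃ s : V ≃ₗ[ZMod 2] V, (∀ u v : V, φ (s u) (s v) = φ u v) ∧
      (∀ u : V, s (s u) = u) ∧
      (∀ u : V, θ (s.symm u) = θ' u) ∧ (∀ u : V, θ' (s.symm u) = θ u) ∧
      (∀ g : V ≃ₗ[ZMod 2] V, (∀ u v : V, φ (g u) (g v) = φ u v) →
        ((∀ u : V, θ (g.symm u) = θ u) ∧ (∀ u : V, θ' (g.symm u) = θ' u)) →
        ∀ u : V, g (s u) = s (g u)) ∧
      (∀ g : V ≃ₗ[ZMod 2] V, (∀ u v : V, φ (g u) (g v) = φ u v) →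
        (((∀ u : V, θ (g.symm u) = θ u) ∧ (∀ u : V, θ' (g.symm u) = θ' u)) ∨
         ((∀ u : V, θ (g.symm u) = θ' u) ∧ (∀ u : V, θ' (g.symm u) = θ u))) →
        ((∀ u : V, θ (g.symm u) = θ u) ∧ (∀ u : V, θ' (g.symm u) = θ' u)) ∨
        ∃ h : V ≃ₗ[ZMod 2] V, (∀ u v : V, φ (h u) (h v) = φ u v) ∧
          (∀ u : V, θ (h.symm u) = θ u) ∧ (∀ u : V, θ' (h.symm u) = θ' u) ∧
          ∀ u : V, g u = h (s u)) := by
  classical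
  haveI : Finite V := Module.finite_of_finite (ZMod 2)
  haveI : Fintype V := Fintype.ofFinite V
  haveI : Nonempty V := ⟨0⟩
  have hr2 : ∀ r : ZMod 2, r = 0 ∨ r = 1 := by decide
  have haa : ∀ a : ZMod 2, a + a = 0 := by decide
  have hsq : ∀ a : ZMod 2, a * a = a := by decide
  -- polarization identities
  have hpol : ∀ u v : V, θ (u + v) = φ u v + θ u + θ v := fun u v => by
    linear_combination - hθ u v
  have hpol' : ∀ u v : V, θ' (u + v) = φ u v + θ' u + θ' v := fun u v => by
    linear_combination - hθ' u v
  have hθ0 : θ 0 = 0 := by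
    have h := hpol 0 0
    simp only [add_zero, halt, zero_add] at h
    linear_combination - h
  have hθ'0 : θ' 0 = 0 := by
    have h := hpol' 0 0
    simp only [add_zero, halt, zero_add] at h
    linear_combination - h
  -- symmetry of φ
  have hsymm : ∀ u v : V, φ u v = φ v u := by
    intro u v
    have h := halt (u + v)
    simp only [map_add, LinearMap.add_apply, halt, zero_add, add_zero] at h
    linear_combination h - haa (φ v u)
  -- the difference θ + θ' as a linear functional
  have Lmk : ∃ c : V, ∀ u : V, θ u + θ' u = φ u c := by
    let L : V →ₗ[ZMod 2] ZMod 2 :=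
      { toFun := fun u => θ u + θ' u
        map_add' := fun u v => by
          show θ (u + v) + θ' (u + v) = _
          rw [hpol, hpol']
          linear_combination haa (φ u v)
        map_smul' := fun r u => by
          rcases hr2 r with h | h <;> subst h <;>
            simp [hθ0, hθ'0] }
    have hinj : Function.Injective (φ : V →ₗ[ZMod 2] Module.Dual (ZMod 2) V) := by
      rw [← LinearMap.ker_eq_bot, LinearMap.ker_eq_bot']
      intro u hu
      exact hnd u fun v => by
        have : φ u v = (0 : Module.Dual (ZMod 2) V) v := by rw [← hu]
        simpa using this
    have hsurj : Function.Surjective (φ : V →ₗ[ZMod 2] Module.Dual (ZMod 2) V) :=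
      (LinearMap.injective_iff_surjective_of_finrank_eq_finrank
        (Subspace.dual_finrank_eq (V := V)).symm).mp hinj
    obtain ⟨c, hc⟩ := hsurj L
    exact ⟨c, fun u => by rw [hsymm u c, hc]; rfl⟩
  obtain ⟨c, hLc⟩ := Lmk
  have hδ : ∀ u : V, θ' u = θ u + φ u c := fun u => by
    linear_combination (hLc u) - haa (θ u)
  -- Gauss sum argument to show θ c = 0
  have hsum0 : ∀ w : V, w ≠ 0 → ∑ u : V, chi2 (φ u w) = 0 := by
    intro w hw
    obtain ⟨d, hd⟩ : ∃ d : V, φ d w ≠ 0 := by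
      by_contra h
      push_neg at h
      exact hw (hnd w fun v => by rw [hsymm]; exact h v)
    have hd1 : φ d w = 1 := by
      rcases hr2 (φ d w) with h | h
      · exact absurd h hd
      · exact h
    have key : ∑ u : V, chi2 (φ (d + u) w) = ∑ u : V, chi2 (φ u w) :=
      Fintype.sum_equiv (Equiv.addLeft d) _ _ (fun u => rfl)
    have key2 : ∀ u : V, chi2 (φ (d + u) w) = - chi2 (φ u w) := by
      intro u
      rw [map_add, LinearMap.add_apply, chi2_add, hd1, chi2_one]
      ring
    rw [Finset.sum_congr rfl (fun u _ => key2 u), Finset.sum_neg_distrib] at key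
    omega
  set S : ℤ := ∑ u : V, chi2 (θ u) with hS
  have hSS : S * S = (Fintype.card V : ℤ) := by
    calc S * S = ∑ u : V, ∑ v : V, chi2 (θ u) * chi2 (θ v) := by
          rw [hS, Finset.sum_mul_sum]
      _ = ∑ u : V, ∑ w : V, chi2 (θ w) * chi2 (φ u w) := by
          refine Finset.sum_congr rfl fun u _ => ?_
          refine (Fintype.sum_equiv (Equiv.addLeft u)
            (fun w => chi2 (θ w) * chi2 (φ u w))
            (fun v => chi2 (θ u) * chi2 (θ v)) fun w => ?_).symm
          show chi2 (θ w) * chi2 (φ u w) = chi2 (θ u) * chi2 (θ (u + w))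
          rw [← chi2_add, ← chi2_add, hpol u w]
          congr 1
          linear_combination - haa (θ u)
      _ = ∑ w : V, chi2 (θ w) * ∑ u : V, chi2 (φ u w) := by
          rw [Finset.sum_comm]
          exact Finset.sum_congr rfl fun w _ => (Finset.mul_sum _ _ _).symm
      _ = (Fintype.card V : ℤ) := by
          rw [Finset.sum_eq_single 0]
          · simp [hθ0, chi2_zero]
          · intro w _ hw
            rw [hsum0 w hw, mul_zero]
          · intro h
            exact absurd (Finset.mem_univ 0) h
  have hcardpos : 0 < Fintype.card V := Fintype.card_pos
  have hSne : S ≠ 0 := by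
    intro h
    rw [h, mul_zero] at hSS
    have : Fintype.card V = 0 := by exact_mod_cast hSS.symm
    omega
  obtain ⟨g0, hg0, hg0'⟩ := horbit
  have hS' : ∑ u : V, chi2 (θ' u) = S := by
    rw [hS]
    exact Fintype.sum_equiv g0.symm.toEquiv _ _ fun u => by rw [hg0' u]; rfl
  have htrans : ∀ u : V, θ' u = θ (u + c) + θ c := fun u => by
    linear_combination (hδ u) - (hpol u c) - haa (θ c)
  have htrS : ∑ u : V, chi2 (θ' u) = chi2 (θ c) * S := by
    calc ∑ u : V, chi2 (θ' u) = ∑ u : V, chi2 (θ c) * chi2 (θ (u + c)) := by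
          refine Finset.sum_congr rfl fun u _ => ?_
          rw [← chi2_add]
          congr 1
          linear_combination htrans u
      _ = chi2 (θ c) * ∑ u : V, chi2 (θ (u + c)) := (Finset.mul_sum _ _ _).symm
      _ = chi2 (θ c) * S := by
          congr 1
          exact Fintype.sum_equiv (Equiv.addRight c) _ _ fun u => rfl
  have hθc : θ c = 0 := by
    rcases hr2 (θ c) with h | h
    · exact h
    · exfalso
      have hk : S = chi2 (θ c) * S := hS'.symm.trans htrS
      rw [h, chi2_one, neg_one_mul] at hk
      omega
  have hθ'c : θ' c = 0 := by
    rw [hδ c, hθc, halt c, add_zero]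
  -- the transvection s
  have hθac : ∀ a : ZMod 2, θ (a • c) = 0 := by
    intro a
    rcases hr2 a with h | h <;> subst h <;> simp [hθ0, hθc]
  have hθ'ac : ∀ a : ZMod 2, θ' (a • c) = 0 := by
    intro a
    rcases hr2 a with h | h <;> subst h <;> simp [hθ'0, hθ'c]
  let f : V →ₗ[ZMod 2] V :=
    { toFun := fun u => u + φ u c • c
      map_add' := fun u v => by
        simp only [map_add, LinearMap.add_apply, add_smul]
        abel
      map_smul' := fun r u => by
        simp only [map_smul, LinearMap.smul_apply, RingHom.id_apply, smul_add,
          smul_smul, smul_eq_mul] }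
  have hfdef : ∀ u : V, f u = u + φ u c • c := fun u => rfl
  have hfc : ∀ u : V, φ (f u) c = φ u c := by
    intro u
    rw [hfdef, map_add, LinearMap.add_apply, map_smul, LinearMap.smul_apply,
      halt c, smul_zero, add_zero]
  have hff : Function.Involutive f := by
    intro u
    rw [hfdef (f u), hfc, hfdef, add_assoc, ← add_smul, haa, zero_smul, add_zero]
  let s : V ≃ₗ[ZMod 2] V := LinearEquiv.ofInvolutive f hff
  have hsdef : ∀ u : V, s u = u + φ u c • c := fun u => rfl
  have hsinv : ∀ u : V, s (s u) = u := fun u => hff u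
  have hssymm : ∀ u : V, s.symm u = s u := by
    intro u
    rw [LinearEquiv.symm_apply_eq]
    exact (hsinv u).symm
  have hssymp : ∀ u v : V, φ (s u) (s v) = φ u v := by
    intro u v
    rw [hsdef, hsdef]
    simp only [map_add, map_smul, LinearMap.add_apply, LinearMap.smul_apply,
      smul_eq_mul]
    linear_combination (φ u c) * (hsymm c v) + (φ u c * φ v c) * (halt c) +
      haa (φ u c * φ v c)
  have hθs : ∀ u : V, θ (s u) = θ' u := by
    intro u
    rw [hsdef, hpol, hθac, add_zero, map_smul, smul_eq_mul, hsq]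
    linear_combination - (hδ u)
  have hθ's : ∀ u : V, θ' (s u) = θ u := by
    intro u
    rw [hsdef, hpol', hθ'ac, add_zero, map_smul, smul_eq_mul, hsq]
    linear_combination hδ u + haa (φ u c)
  -- centralizing property
  have hcent : ∀ g : V ≃ₗ[ZMod 2] V, (∀ u v : V, φ (g u) (g v) = φ u v) →
      ((∀ u : V, θ (g.symm u) = θ u) ∧ (∀ u : V, θ' (g.symm u) = θ' u)) →
      ∀ u : V, g (s u) = s (g u) := by
    rintro g hg ⟨h1, h2⟩ u
    have hφfix : ∀ u : V, φ (g.symm u) c = φ u c := by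
      intro u
      linear_combination - hLc (g.symm u) + hLc u + h1 u + h2 u
    have hgc : g c = c := by
      have hz : ∀ w : V, φ w (g c) = φ w c := by
        intro w
        have h3 := hg (g.symm w) c
        rw [g.apply_symm_apply] at h3
        rw [h3, hφfix]
      have : ∀ w : V, φ (g c - c) w = 0 := by
        intro w
        rw [map_sub, LinearMap.sub_apply, hsymm (g c) w, hsymm c w, hz, sub_self]
      have h0 := hnd _ this
      rwa [sub_eq_zero] at h0
    have hguc : φ (g u) c = φ u c := by
      have h4 := hφfix (g u)
      rw [g.symm_apply_apply] at h4
      exact h4.symm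
    rw [hsdef, hsdef, map_add, map_smul, hgc, hguc]
  refine ⟨s, hssymp, hsinv, fun u => by rw [hssymm]; exact hθs u,
    fun u => by rw [hssymm]; exact hθ's u, hcent, ?_⟩
  intro g hg hcase
  rcases hcase with hfix | hswap
  · exact Or.inl hfix
  · right
    refine ⟨s.trans g, ?_, ?_, ?_, ?_⟩
    · intro u v
      show φ (g (s u)) (g (s v)) = φ u v
      rw [hg, hssymp]
    · intro u
      show θ ((s.trans g).symm u) = θ u
      rw [LinearEquiv.symm_trans_apply, hssymm, hθs, hswap.2]
    · intro u
      show θ' ((s.trans g).symm u) = θ' u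
      rw [LinearEquiv.symm_trans_apply, hssymm, hθ's, hswap.1]
    · intro u
      show g u = g (s (s u))
      rw [hsinv]
end
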